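/- arXiv:2108.02135 — 6 statements merged into one kernel-verified Lean document; each statement's English description precedes it below -/
import Mathlib

section
/- Let N ∈ (1,∞), p ∈ (1,N) be real, p* := pN/(N−p), and b > 0. Define v_b : [0,∞) → ℝ by v_b(r) := (1 + b·r^{p/(p−1)})^{(p−N)/p}. Then both of the following quantities are finite and they are equal: (σ_{N−1} ∫₀^∞ v_b(t)^{p*} t^{N−1} dt)^{1/p*} = Eucl(N,p) · (σ_{N−1} ∫₀^∞ |v_b'(t)|^{p} t^{N−1} dt)^{1/p}, where v_b' denotes the (everywhere defined on (0,∞)) derivative of v_b. In particular v_b is an extremal function for the one-dimensional Bliss inequality. -/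
open MeasureTheory

/-- The volume of the unit ball in dimension `N` (for real `N > 0`):
`ω_N = π^{N/2} / Γ(N/2 + 1)`. -/
noncomputable def omegaN (N : ℝ) : ℝ := Real.pi ^ (N / 2) / Real.Gamma (N / 2 + 1)

/-- The sharp Euclidean Sobolev constant `Eucl(N,p)`. -/
noncomputable def Eucl (N p : ℝ) : ℝ :=
  (1 / N) * (N * (p - 1) / (N - p)) ^ ((p - 1) / p) *
    (Real.Gamma (N + 1) /
      (N * omegaN N * Real.Gamma (N / p) * Real.Gamma (N + 1 - N / p))) ^ (1 / N)


open Real Set MeasureTheory intervalIntegral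

lemma beta_cong {α γ : ℝ} : ∀ x ∈ Icc (0:ℝ) 1,
    ((x:ℂ) ^ ((α:ℂ) - 1) * (1 - (x:ℂ)) ^ ((γ:ℂ) - 1)) =
      ((x ^ (α - 1) * (1 - x) ^ (γ - 1) : ℝ) : ℂ) := by
  intro x hx
  rw [Complex.ofReal_mul, Complex.ofReal_cpow hx.1, Complex.ofReal_cpow (by linarith [hx.2])]
  push_cast
  ring_nf

lemma betaIoo_integrable {α γ : ℝ} (hα : 0 < α) (hγ : 0 < γ) :
    IntegrableOn (fun x : ℝ => x ^ (α - 1) * (1 - x) ^ (γ - 1)) (Ioo 0 1) := by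
  have h := (Complex.betaIntegral_convergent (u := α) (v := γ) (by simpa) (by simpa)).1
  have h2 := h.re
  refine (IntegrableOn.congr_fun h2 ?_ measurableSet_Ioc).mono_set Ioo_subset_Ioc_self
  intro x hx
  simp only []
  rw [beta_cong x ⟨hx.1.le, hx.2⟩]
  simp

lemma betaIoo_eq {α γ : ℝ} (hα : 0 < α) (hγ : 0 < γ) :
    ∫ x in Ioo (0:ℝ) 1, x ^ (α - 1) * (1 - x) ^ (γ - 1)
      = Real.Gamma α * Real.Gamma γ / Real.Gamma (α + γ) := by
  have hG := Complex.Gamma_mul_Gamma_eq_betaIntegral (s := α) (t := γ) (by simpa) (by simpa)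
  have hbeta : Complex.betaIntegral α γ =
      ((∫ x in Ioo (0:ℝ) 1, x ^ (α - 1) * (1 - x) ^ (γ - 1) : ℝ) : ℂ) := by
    rw [Complex.betaIntegral]
    rw [intervalIntegral.integral_congr (g := fun x : ℝ =>
        ((x ^ (α - 1) * (1 - x) ^ (γ - 1) : ℝ) : ℂ)) ?_]
    · rw [intervalIntegral.integral_ofReal, intervalIntegral.integral_of_le zero_le_one,
        ← integral_Ioc_eq_integral_Ioo]
    · intro x hx
      rw [uIcc_of_le zero_le_one] at hx
      exact beta_cong x hx
  rw [hbeta, ← Complex.ofReal_add, Complex.Gamma_ofReal, Complex.Gamma_ofReal,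
    Complex.Gamma_ofReal, ← Complex.ofReal_mul, ← Complex.ofReal_mul] at hG
  have := Complex.ofReal_inj.mp hG
  have hGpos : Real.Gamma (α + γ) ≠ 0 := (Real.Gamma_pos_of_pos (by linarith)).ne'
  field_simp
  linarith [this]

open Real Set MeasureTheory

lemma phi_image : (fun x : ℝ => x / (1 - x)) '' Ioo 0 1 = Ioi 0 := by
  ext u
  constructor
  · rintro ⟨x, hx, rfl⟩
    exact div_pos hx.1 (by linarith [hx.2])
  · intro hu
    have hu' : (0:ℝ) < u := hu
    have h1 : (0:ℝ) < 1 + u := by linarith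
    refine ⟨u / (1 + u), ⟨div_pos hu' h1, ?_⟩, ?_⟩
    · rw [div_lt_one h1]; linarith
    · have : 1 - u / (1 + u) = 1 / (1 + u) := by field_simp; ring
      simp only [this]
      field_simp

lemma phi_deriv : ∀ x ∈ Ioo (0:ℝ) 1,
    HasDerivWithinAt (fun x : ℝ => x / (1 - x)) (((1 - x) ^ 2)⁻¹) (Ioo 0 1) x := by
  intro x hx
  have h1 : (1 : ℝ) - x ≠ 0 := by have := hx.2; intro h; linarith [h]
  have := (hasDerivAt_id x).div ((hasDerivAt_id x).const_sub 1) h1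
  convert this.hasDerivWithinAt using 1
  · rfl
  · rfl
  · rfl
  · simp only [id]
    field_simp
    ring

lemma phi_inj : InjOn (fun x : ℝ => x / (1 - x)) (Ioo 0 1) := by
  intro x hx y hy h
  have h1 : (1 : ℝ) - x ≠ 0 := by have := hx.2; intro h; linarith [h]
  have h2 : (1 : ℝ) - y ≠ 0 := by have := hy.2; intro h; linarith [h]
  field_simp at h
  nlinarith [h]

lemma betaIoi {α γ : ℝ} (hα : 0 < α) (hγ : 0 < γ) :
    IntegrableOn (fun u : ℝ => u ^ (α - 1) * (1 + u) ^ (-(α + γ))) (Ioi 0) ∧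
    ∫ u in Ioi (0:ℝ), u ^ (α - 1) * (1 + u) ^ (-(α + γ))
      = Real.Gamma α * Real.Gamma γ / Real.Gamma (α + γ) := by
  set g : ℝ → ℝ := fun u => u ^ (α - 1) * (1 + u) ^ (-(α + γ)) with hg
  have key : ∀ x ∈ Ioo (0:ℝ) 1,
      |((1 - x) ^ 2)⁻¹| • g (x / (1 - x)) = x ^ (α - 1) * (1 - x) ^ (γ - 1) := by
    intro x hx
    obtain ⟨hx0, hx1⟩ := hx
    have hy : (0:ℝ) < 1 - x := by linarith
    have h1 : 1 + x / (1 - x) = (1 - x)⁻¹ := by field_simp; ring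
    rw [hg]
    simp only [smul_eq_mul, h1]
    rw [abs_of_pos (by positivity), Real.div_rpow hx0.le hy.le,
      ← Real.rpow_neg_one (1 - x), ← Real.rpow_natCast (1-x) 2, ← Real.rpow_neg hy.le,
      ← Real.rpow_mul hy.le]
    rw [div_eq_mul_inv, ← Real.rpow_neg hy.le]
    have hcomb : ∀ e1 e2 e3 : ℝ, (1-x)^e1 * (x ^ (α - 1) * (1-x)^e2 * (1-x)^e3) =
        x ^ (α - 1) * (1-x)^(e1+e2+e3) := by
      intro e1 e2 e3
      rw [Real.rpow_add hy, Real.rpow_add hy]; ring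
    rw [hcomb]
    congr 1
    push_cast
    ring
  have him := integral_image_eq_integral_abs_deriv_smul measurableSet_Ioo phi_deriv phi_inj g
  have hint := (integrableOn_image_iff_integrableOn_abs_deriv_smul measurableSet_Ioo
    phi_deriv phi_inj g)
  rw [phi_image] at him hint
  constructor
  · rw [hint]
    exact (betaIoo_integrable hα hγ).congr_fun (fun x hx => (key x hx).symm) measurableSet_Ioo
  · rw [him, setIntegral_congr_fun measurableSet_Ioo key, betaIoo_eq hα hγ]

lemma J_lemma {a q b γ : ℝ} (ha : 0 < a) (hq : 0 < q) (hb : 0 < b) (hγ : 0 < γ) :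
    IntegrableOn (fun t : ℝ => t ^ (a - 1) * (1 + b * t ^ q) ^ (-(a / q + γ))) (Ioi 0) ∧
    ∫ t in Ioi (0:ℝ), t ^ (a - 1) * (1 + b * t ^ q) ^ (-(a / q + γ))
      = b ^ (-(a / q)) / q * (Real.Gamma (a / q) * Real.Gamma γ / Real.Gamma (a / q + γ)) := by
  have hα : 0 < a / q := div_pos ha hq
  obtain ⟨hInt, hVal⟩ := betaIoi hα hγ
  set f : ℝ → ℝ := fun u => (u / b) ^ (1 / q) with hf
  have hf' : ∀ u ∈ Ioi (0:ℝ),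
      HasDerivWithinAt f (1 / q * (u / b) ^ (1 / q - 1) * b⁻¹) (Ioi 0) u := by
    intro u hu
    have hu' : (0:ℝ) < u := hu
    have h1 : HasDerivAt (fun u : ℝ => u / b) b⁻¹ u := by
      simpa using (hasDerivAt_id u).div_const b
    have h2 := (Real.hasDerivAt_rpow_const (x := u / b) (p := 1 / q)
      (Or.inl (div_pos hu' hb).ne')).comp u h1
    exact h2.hasDerivWithinAt
  have hinj : InjOn f (Ioi 0) := by
    intro x hx y hy hxy
    have hx' : (0:ℝ) < x := hx
    have hy' : (0:ℝ) < y := hy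
    have h2 : x / b = y / b := by
      have h3 := congrArg (fun z : ℝ => z ^ (q : ℝ)) hxy
      simp only [hf, ← Real.rpow_natCast] at h3
      rw [← Real.rpow_mul (div_pos hx' hb).le, ← Real.rpow_mul (div_pos hy' hb).le,
        one_div_mul_cancel hq.ne', Real.rpow_one, Real.rpow_one] at h3
      exact h3
    field_simp at h2
    exact h2
  have himg : f '' Ioi 0 = Ioi 0 := by
    ext u
    constructor
    · rintro ⟨x, hx, rfl⟩
      have hx' : (0:ℝ) < x := hx
      exact Real.rpow_pos_of_pos (div_pos hx' hb) _
    · intro hu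
      have hu' : (0:ℝ) < u := hu
      refine ⟨b * u ^ q, mem_Ioi.mpr (by positivity), ?_⟩
      simp only [hf]
      rw [mul_comm b _, mul_div_assoc, div_self hb.ne', mul_one,
        ← Real.rpow_mul hu'.le, mul_one_div, div_self hq.ne', Real.rpow_one]
  set F : ℝ → ℝ := fun t => t ^ (a - 1) * (1 + b * t ^ q) ^ (-(a / q + γ)) with hF
  have key : ∀ u ∈ Ioi (0:ℝ), |1 / q * (u / b) ^ (1 / q - 1) * b⁻¹| • F (f u)
      = b ^ (-(a / q)) / q * (u ^ (a / q - 1) * (1 + u) ^ (-(a / q + γ))) := by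
    intro u hu
    have hu' : (0:ℝ) < u := hu
    have hw : (0:ℝ) < u / b := div_pos hu' hb
    have e1 : (f u) ^ (a - 1) = (u / b) ^ (1 / q * (a - 1)) :=
      (Real.rpow_mul hw.le _ _).symm
    have e2 : 1 + b * (f u) ^ q = 1 + u := by
      simp only [hf]
      rw [← Real.rpow_mul hw.le, one_div_mul_cancel hq.ne', Real.rpow_one,
        mul_comm b _, div_mul_cancel₀ u hb.ne']
    have e3 : (u / b) ^ (1 / q - 1) * (u / b) ^ (1 / q * (a - 1)) = (u / b) ^ (a / q - 1) := by
      rw [← Real.rpow_add hw]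
      congr 1
      field_simp
      ring
    have e4 : (u / b) ^ (a / q - 1) = u ^ (a / q - 1) * b ^ (-(a / q - 1)) := by
      rw [Real.div_rpow hu'.le hb.le, Real.rpow_neg hb.le, div_eq_mul_inv]
    have e5 : b⁻¹ * b ^ (-(a / q - 1)) = b ^ (-(a / q)) := by
      rw [← Real.rpow_neg_one b, ← Real.rpow_add hb]
      congr 1
      ring
    simp only [smul_eq_mul, hF]
    rw [abs_of_pos (by positivity), e1, e2]
    calc 1 / q * (u / b) ^ (1 / q - 1) * b⁻¹ *
          ((u / b) ^ (1 / q * (a - 1)) * (1 + u) ^ (-(a / q + γ)))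
        = 1 / q * b⁻¹ * ((u / b) ^ (1 / q - 1) * (u / b) ^ (1 / q * (a - 1))) *
            (1 + u) ^ (-(a / q + γ)) := by ring
      _ = 1 / q * b⁻¹ * (u ^ (a / q - 1) * b ^ (-(a / q - 1))) *
            (1 + u) ^ (-(a / q + γ)) := by rw [e3, e4]
      _ = 1 / q * (b⁻¹ * b ^ (-(a / q - 1))) * u ^ (a / q - 1) *
            (1 + u) ^ (-(a / q + γ)) := by ring
      _ = 1 / q * b ^ (-(a / q)) * u ^ (a / q - 1) * (1 + u) ^ (-(a / q + γ)) := by rw [e5]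
      _ = b ^ (-(a / q)) / q * (u ^ (a / q - 1) * (1 + u) ^ (-(a / q + γ))) := by ring
  have him := integral_image_eq_integral_abs_deriv_smul measurableSet_Ioi hf' hinj F
  have hiff := integrableOn_image_iff_integrableOn_abs_deriv_smul measurableSet_Ioi hf' hinj F
  rw [himg] at him hiff
  constructor
  · rw [hiff]
    refine IntegrableOn.congr_fun ?_ (fun u hu => (key u hu).symm) measurableSet_Ioi
    exact hInt.const_mul _
  · rw [him, setIntegral_congr_fun measurableSet_Ioi key, MeasureTheory.integral_const_mul, hVal]

private lemma logm {x y : ℝ} (hx : 0 < x) (hy : 0 < y) :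
    Real.log (x * y) = Real.log x + Real.log y := Real.log_mul hx.ne' hy.ne'

private lemma logd {x y : ℝ} (hx : 0 < x) (hy : 0 < y) :
    Real.log (x / y) = Real.log x - Real.log y := Real.log_div hx.ne' hy.ne'

lemma real_identity (N p b : ℝ) (hN : 1 < N) (hp1 : 1 < p) (hpN : p < N) (hb : 0 < b) :
    (N * omegaN N * (b ^ (-(N / (p / (p - 1)))) / (p / (p - 1)) *
        (Real.Gamma (N / (p / (p - 1))) * Real.Gamma (N / p) /
          Real.Gamma (N / (p / (p - 1)) + N / p)))) ^ ((N - p) / (p * N))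
      = Eucl N p *
        (N * omegaN N * (((N / p - 1) * (b * (p / (p - 1)))) ^ p *
          (b ^ (-((N + p / (p - 1)) / (p / (p - 1)))) / (p / (p - 1)) *
            (Real.Gamma ((N + p / (p - 1)) / (p / (p - 1))) * Real.Gamma (N / p - 1) /
              Real.Gamma ((N + p / (p - 1)) / (p / (p - 1)) + (N / p - 1)))))) ^ (1 / p) := by
  have hp0 : (0:ℝ) < p := by linarith
  have hp1' : (0:ℝ) < p - 1 := by linarith
  have hN0 : (0:ℝ) < N := by linarith
  have hNp : (0:ℝ) < N - p := by linarith
  have hq : (0:ℝ) < p / (p - 1) := by positivity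
  have hγ : (0:ℝ) < N / p - 1 := by
    rw [sub_pos]; exact (one_lt_div hp0).mpr hpN
  have hαe : (0:ℝ) < N * (p - 1) / p := by positivity
  have hK : (0:ℝ) < N * (p - 1) / (N - p) := by positivity
  have a1 : N / (p / (p - 1)) = N * (p - 1) / p := by
    rw [div_div_eq_mul_div]
  have a2 : (N + p / (p - 1)) / (p / (p - 1)) = N * (p - 1) / p + 1 := by
    field_simp
  have a3 : N * (p - 1) / p + N / p = N := by field_simp; ring
  have a4 : N * (p - 1) / p + 1 + (N / p - 1) = N := by field_simp; ring
  have a5 : N + 1 - N / p = N * (p - 1) / p + 1 := by field_simp; ring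
  rw [a1, a2, a3, a4]
  -- Gamma positivity
  have hA : (0:ℝ) < Real.Gamma (N * (p - 1) / p) := Real.Gamma_pos_of_pos hαe
  have hB : (0:ℝ) < Real.Gamma (N / p - 1) := Real.Gamma_pos_of_pos hγ
  have hC : (0:ℝ) < Real.Gamma N := Real.Gamma_pos_of_pos hN0
  have hω : (0:ℝ) < omegaN N := by
    rw [omegaN]
    exact div_pos (Real.rpow_pos_of_pos Real.pi_pos _)
      (Real.Gamma_pos_of_pos (by linarith))
  have hσ : (0:ℝ) < N * omegaN N := by positivity
  -- Gamma recurrences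
  have g1 : Real.Gamma (N * (p - 1) / p + 1)
      = N * (p - 1) / p * Real.Gamma (N * (p - 1) / p) := Real.Gamma_add_one hαe.ne'
  have g2 : Real.Gamma (N / p) = (N / p - 1) * Real.Gamma (N / p - 1) := by
    have h := Real.Gamma_add_one (s := N / p - 1) hγ.ne'
    rw [sub_add_cancel] at h
    exact h
  have g3 : Real.Gamma (N + 1) = N * Real.Gamma N := Real.Gamma_add_one hN0.ne'
  rw [g1, g2, Eucl, a5, g1, g3, g2]
  -- positivity of the big factors
  have hb1 : (0:ℝ) < b ^ (-(N * (p - 1) / p)) := Real.rpow_pos_of_pos hb _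
  have hb2 : (0:ℝ) < b ^ (-(N * (p - 1) / p + 1)) := Real.rpow_pos_of_pos hb _
  have hV1 : (0:ℝ) < b ^ (-(N * (p - 1) / p)) / (p / (p - 1)) *
      (Real.Gamma (N * (p - 1) / p) * ((N / p - 1) * Real.Gamma (N / p - 1)) /
        Real.Gamma N) := by positivity
  have hw : (0:ℝ) < (N / p - 1) * (b * (p / (p - 1))) := by positivity
  have hwp : (0:ℝ) < ((N / p - 1) * (b * (p / (p - 1)))) ^ p := Real.rpow_pos_of_pos hw _
  have hV2 : (0:ℝ) < b ^ (-(N * (p - 1) / p + 1)) / (p / (p - 1)) *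
      (N * (p - 1) / p * Real.Gamma (N * (p - 1) / p) * Real.Gamma (N / p - 1) /
        Real.Gamma N) := by positivity
  have hP1 : (0:ℝ) < N * omegaN N * (b ^ (-(N * (p - 1) / p)) / (p / (p - 1)) *
      (Real.Gamma (N * (p - 1) / p) * ((N / p - 1) * Real.Gamma (N / p - 1)) /
        Real.Gamma N)) := mul_pos hσ hV1
  have hP2 : (0:ℝ) < N * omegaN N * (((N / p - 1) * (b * (p / (p - 1)))) ^ p *
      (b ^ (-(N * (p - 1) / p + 1)) / (p / (p - 1)) *
        (N * (p - 1) / p * Real.Gamma (N * (p - 1) / p) * Real.Gamma (N / p - 1) /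
          Real.Gamma N))) := mul_pos hσ (mul_pos hwp hV2)
  have hinner : (0:ℝ) < N * Real.Gamma N /
      (N * omegaN N * ((N / p - 1) * Real.Gamma (N / p - 1)) *
        (N * (p - 1) / p * Real.Gamma (N * (p - 1) / p))) := by positivity
  have hE : (0:ℝ) < 1 / N * (N * (p - 1) / (N - p)) ^ ((p - 1) / p) *
      (N * Real.Gamma N /
        (N * omegaN N * ((N / p - 1) * Real.Gamma (N / p - 1)) *
          (N * (p - 1) / p * Real.Gamma (N * (p - 1) / p)))) ^ (1 / N) := by
    have := Real.rpow_pos_of_pos hK ((p - 1) / p)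
    have := Real.rpow_pos_of_pos hinner (1 / N)
    positivity
  have hRHS : (0:ℝ) < (1 / N * (N * (p - 1) / (N - p)) ^ ((p - 1) / p) *
      (N * Real.Gamma N /
        (N * omegaN N * ((N / p - 1) * Real.Gamma (N / p - 1)) *
          (N * (p - 1) / p * Real.Gamma (N * (p - 1) / p)))) ^ (1 / N)) *
      (N * omegaN N * (((N / p - 1) * (b * (p / (p - 1)))) ^ p *
        (b ^ (-(N * (p - 1) / p + 1)) / (p / (p - 1)) *
          (N * (p - 1) / p * Real.Gamma (N * (p - 1) / p) * Real.Gamma (N / p - 1) /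
            Real.Gamma N)))) ^ (1 / p) :=
    mul_pos hE (Real.rpow_pos_of_pos hP2 _)
  rw [← Real.exp_log (Real.rpow_pos_of_pos hP1 ((N - p) / (p * N))), ← Real.exp_log hRHS]
  congr 1
  rw [Real.log_rpow hP1, logm hE (Real.rpow_pos_of_pos hP2 _), Real.log_rpow hP2]
  -- expand all the logs
  rw [logm hσ hV1, logm (div_pos hb1 hq) (by positivity), logd hb1 hq, Real.log_rpow hb,
    logd (by positivity) hC, logm hA (mul_pos hγ hB), logm hγ hB]
  rw [logm hσ (mul_pos hwp hV2), logm hwp hV2, Real.log_rpow hw,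
    logm hγ (mul_pos hb hq), logm hb hq,
    logm (div_pos hb2 hq) (by positivity), logd hb2 hq, Real.log_rpow hb,
    logd (by positivity) hC, logm (mul_pos hαe hA) hB, logm hαe hA]
  -- expand log Eucl
  have h1N : (0:ℝ) < 1 / N := by positivity
  have hKp : (0:ℝ) < (N * (p - 1) / (N - p)) ^ ((p - 1) / p) := Real.rpow_pos_of_pos hK _
  rw [logm (mul_pos h1N hKp) (Real.rpow_pos_of_pos hinner _), logm h1N hKp,
    Real.log_rpow hK, Real.log_rpow hinner, one_div, Real.log_inv,
    logd (mul_pos hN0 hC) (by positivity), logm hN0 hC,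
    logm (mul_pos hσ (mul_pos hγ hB)) (mul_pos hαe hA), logm hσ (mul_pos hγ hB),
    logm hγ hB, logm hαe hA]
  -- the two multiplicative relations
  have rel1 : Real.log (N * (p - 1) / p)
      = Real.log (N * (p - 1) / (N - p)) + Real.log (N / p - 1) := by
    rw [← logm hK hγ]
    congr 1
    field_simp
  have rel2 : Real.log N
      = Real.log (N * (p - 1) / (N - p)) + Real.log (N / p - 1) + Real.log (p / (p - 1)) := by
    rw [← logm hK hγ, ← logm (mul_pos hK hγ) hq]
    congr 1
    field_simp
  rw [rel1, rel2]
  field_simp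
  ring

/-- The functions `v_b(r) = (1 + b r^{p/(p-1)})^{(p-N)/p}`, `b > 0`, are extremal for the
one-dimensional Bliss inequality: both sides are finite and equality holds, where `v'` is the
(everywhere defined on `(0,∞)`) derivative of `v_b`. -/
theorem bliss_extremal (N p b : ℝ) (hN : 1 < N) (hp1 : 1 < p) (hpN : p < N) (hb : 0 < b)
    (v v' : ℝ → ℝ)
    (hv : ∀ r : ℝ, v r = (1 + b * r ^ (p / (p - 1))) ^ ((p - N) / p))
    (hv' : ∀ r : ℝ, 0 < r → HasDerivAt v (v' r) r) :
    (∫⁻ t in Set.Ioi (0 : ℝ),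
        ENNReal.ofReal (v t ^ (p * N / (N - p)) * t ^ (N - 1))) ≠ ⊤ ∧
    (∫⁻ t in Set.Ioi (0 : ℝ), ENNReal.ofReal (|v' t| ^ p * t ^ (N - 1))) ≠ ⊤ ∧
    (ENNReal.ofReal (N * omegaN N) *
        ∫⁻ t in Set.Ioi (0 : ℝ),
          ENNReal.ofReal (v t ^ (p * N / (N - p)) * t ^ (N - 1))) ^ ((N - p) / (p * N)) =
      ENNReal.ofReal (Eucl N p) *
        (ENNReal.ofReal (N * omegaN N) *
            ∫⁻ t in Set.Ioi (0 : ℝ),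
              ENNReal.ofReal (|v' t| ^ p * t ^ (N - 1))) ^ (1 / p) := by
  have hp0 : (0:ℝ) < p := by linarith
  have hp1' : (0:ℝ) < p - 1 := by linarith
  have hN0 : (0:ℝ) < N := by linarith
  have hNp : (0:ℝ) < N - p := by linarith
  have hq : (0:ℝ) < p / (p - 1) := by positivity
  have hγ1 : (0:ℝ) < N / p := by positivity
  have hγ2 : (0:ℝ) < N / p - 1 := by rw [sub_pos]; exact (one_lt_div hp0).mpr hpN
  have hNq : (0:ℝ) < N + p / (p - 1) := by positivity
  -- the two J-lemma instances
  obtain ⟨hInt1, hVal1⟩ := J_lemma (a := N) (q := p / (p - 1)) (b := b) (γ := N / p)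
    hN0 hq hb hγ1
  obtain ⟨hInt2, hVal2⟩ := J_lemma (a := N + p / (p - 1)) (q := p / (p - 1)) (b := b)
    (γ := N / p - 1) hNq hq hb hγ2
  set w : ℝ := (N / p - 1) * (b * (p / (p - 1))) with hwdef
  have hw : (0:ℝ) < w := by positivity
  have hwp : (0:ℝ) < w ^ p := Real.rpow_pos_of_pos hw _
  -- rewrite the first integrand
  have e1 : ∀ t ∈ Set.Ioi (0:ℝ), ENNReal.ofReal (v t ^ (p * N / (N - p)) * t ^ (N - 1))
      = ENNReal.ofReal (t ^ (N - 1) *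
          (1 + b * t ^ (p / (p - 1))) ^ (-(N / (p / (p - 1)) + N / p))) := by
    intro t ht
    have ht' : (0:ℝ) < t := ht
    have hX : (0:ℝ) < 1 + b * t ^ (p / (p - 1)) := by
      have := Real.rpow_pos_of_pos ht' (p / (p - 1))
      nlinarith
    congr 1
    rw [hv t, ← Real.rpow_mul hX.le,
      show (p - N) / p * (p * N / (N - p)) = -(N / (p / (p - 1)) + N / p) by
        field_simp; ring,
      mul_comm]
  -- derivative formula
  have hder : ∀ t ∈ Set.Ioi (0:ℝ), v' t
      = -(w * (t ^ (p / (p - 1) - 1) *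
          (1 + b * t ^ (p / (p - 1))) ^ ((p - N) / p - 1))) := by
    intro t ht
    have ht' : (0:ℝ) < t := ht
    have hX : (0:ℝ) < 1 + b * t ^ (p / (p - 1)) := by
      have := Real.rpow_pos_of_pos ht' (p / (p - 1))
      nlinarith
    have hin : HasDerivAt (fun r : ℝ => 1 + b * r ^ (p / (p - 1)))
        (b * (p / (p - 1) * t ^ (p / (p - 1) - 1))) t := by
      have h0 := Real.hasDerivAt_rpow_const (x := t) (p := p / (p - 1)) (Or.inl ht'.ne')
      exact (h0.const_mul b).const_add 1
    have hout := Real.hasDerivAt_rpow_const (x := 1 + b * t ^ (p / (p - 1)))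
      (p := (p - N) / p) (Or.inl hX.ne')
    have hcomp := hout.comp t hin
    have hvd : HasDerivAt v ((p - N) / p * (1 + b * t ^ (p / (p - 1))) ^ ((p - N) / p - 1) *
        (b * (p / (p - 1) * t ^ (p / (p - 1) - 1)))) t := by
      have hfun : v = fun r : ℝ => (1 + b * r ^ (p / (p - 1))) ^ ((p - N) / p) := funext hv
      rw [hfun]
      exact hcomp
    have huniq := (hv' t ht').unique hvd
    rw [huniq, hwdef]
    have hc : (p - N) / p = -(N / p - 1) := by field_simp; ring
    rw [hc]
    ring
  -- rewrite the second integrand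
  have e2 : ∀ t ∈ Set.Ioi (0:ℝ), ENNReal.ofReal (|v' t| ^ p * t ^ (N - 1))
      = ENNReal.ofReal (w ^ p * (t ^ (N + p / (p - 1) - 1) *
          (1 + b * t ^ (p / (p - 1))) ^
            (-((N + p / (p - 1)) / (p / (p - 1)) + (N / p - 1))))) := by
    intro t ht
    have ht' : (0:ℝ) < t := ht
    have hX : (0:ℝ) < 1 + b * t ^ (p / (p - 1)) := by
      have := Real.rpow_pos_of_pos ht' (p / (p - 1))
      nlinarith
    congr 1
    rw [hder t ht, abs_neg, abs_of_pos (by positivity),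
      Real.mul_rpow hw.le (by positivity),
      Real.mul_rpow (Real.rpow_nonneg ht'.le _) (Real.rpow_nonneg hX.le _),
      ← Real.rpow_mul ht'.le, ← Real.rpow_mul hX.le,
      show (p / (p - 1) - 1) * p = p / (p - 1) by field_simp; ring,
      show ((p - N) / p - 1) * p = -((N + p / (p - 1)) / (p / (p - 1)) + (N / p - 1)) by
        field_simp; ring,
      show N + p / (p - 1) - 1 = p / (p - 1) + (N - 1) by ring,
      Real.rpow_add ht']
    ring
  -- nonnegativity of the target integrands
  have nn1 : 0 ≤ᵐ[volume.restrict (Set.Ioi (0:ℝ))] fun t : ℝ =>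
      t ^ (N - 1) * (1 + b * t ^ (p / (p - 1))) ^ (-(N / (p / (p - 1)) + N / p)) := by
    refine (ae_restrict_iff' measurableSet_Ioi).mpr (ae_of_all _ fun t ht => ?_)
    have ht' : (0:ℝ) < t := ht
    have hX : (0:ℝ) < 1 + b * t ^ (p / (p - 1)) := by
      have := Real.rpow_pos_of_pos ht' (p / (p - 1))
      nlinarith
    exact mul_nonneg (Real.rpow_nonneg ht'.le _) (Real.rpow_nonneg hX.le _)
  have nn2 : 0 ≤ᵐ[volume.restrict (Set.Ioi (0:ℝ))] fun t : ℝ =>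
      w ^ p * (t ^ (N + p / (p - 1) - 1) * (1 + b * t ^ (p / (p - 1))) ^
        (-((N + p / (p - 1)) / (p / (p - 1)) + (N / p - 1)))) := by
    refine (ae_restrict_iff' measurableSet_Ioi).mpr (ae_of_all _ fun t ht => ?_)
    have ht' : (0:ℝ) < t := ht
    have hX : (0:ℝ) < 1 + b * t ^ (p / (p - 1)) := by
      have := Real.rpow_pos_of_pos ht' (p / (p - 1))
      nlinarith
    exact mul_nonneg hwp.le
      (mul_nonneg (Real.rpow_nonneg ht'.le _) (Real.rpow_nonneg hX.le _))
  -- compute the two lintegrals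
  have hI1 : (∫⁻ t in Set.Ioi (0:ℝ),
      ENNReal.ofReal (v t ^ (p * N / (N - p)) * t ^ (N - 1)))
      = ENNReal.ofReal (b ^ (-(N / (p / (p - 1)))) / (p / (p - 1)) *
          (Real.Gamma (N / (p / (p - 1))) * Real.Gamma (N / p) /
            Real.Gamma (N / (p / (p - 1)) + N / p))) := by
    rw [setLIntegral_congr_fun measurableSet_Ioi e1,
      ← ofReal_integral_eq_lintegral_ofReal ?_ nn1]
    · rw [show (fun t : ℝ => t ^ (N - 1) *
          (1 + b * t ^ (p / (p - 1))) ^ (-(N / (p / (p - 1)) + N / p)))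
        = fun t : ℝ => t ^ (N - 1) *
          (1 + b * t ^ (p / (p - 1))) ^ (-(N / (p / (p - 1)) + N / p)) from rfl]
      rw [hVal1]
    · exact hInt1
  have hI2 : (∫⁻ t in Set.Ioi (0:ℝ), ENNReal.ofReal (|v' t| ^ p * t ^ (N - 1)))
      = ENNReal.ofReal (w ^ p *
          (b ^ (-((N + p / (p - 1)) / (p / (p - 1)))) / (p / (p - 1)) *
            (Real.Gamma ((N + p / (p - 1)) / (p / (p - 1))) * Real.Gamma (N / p - 1) /
              Real.Gamma ((N + p / (p - 1)) / (p / (p - 1)) + (N / p - 1))))) := by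
    rw [setLIntegral_congr_fun measurableSet_Ioi e2,
      ← ofReal_integral_eq_lintegral_ofReal (hInt2.const_mul (w ^ p)) nn2]
    rw [MeasureTheory.integral_const_mul, hVal2]
  -- positivity of all the closed forms
  have hA : (0:ℝ) < Real.Gamma (N / (p / (p - 1))) :=
    Real.Gamma_pos_of_pos (by positivity)
  have hB : (0:ℝ) < Real.Gamma (N / p) := Real.Gamma_pos_of_pos hγ1
  have hC : (0:ℝ) < Real.Gamma (N / (p / (p - 1)) + N / p) :=
    Real.Gamma_pos_of_pos (by positivity)
  have hA' : (0:ℝ) < Real.Gamma ((N + p / (p - 1)) / (p / (p - 1))) :=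
    Real.Gamma_pos_of_pos (by positivity)
  have hB' : (0:ℝ) < Real.Gamma (N / p - 1) := Real.Gamma_pos_of_pos hγ2
  have hC' : (0:ℝ) < Real.Gamma ((N + p / (p - 1)) / (p / (p - 1)) + (N / p - 1)) :=
    Real.Gamma_pos_of_pos (by positivity)
  have hbp1 : (0:ℝ) < b ^ (-(N / (p / (p - 1)))) := Real.rpow_pos_of_pos hb _
  have hbp2 : (0:ℝ) < b ^ (-((N + p / (p - 1)) / (p / (p - 1)))) :=
    Real.rpow_pos_of_pos hb _
  have hV1 : (0:ℝ) < b ^ (-(N / (p / (p - 1)))) / (p / (p - 1)) *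
      (Real.Gamma (N / (p / (p - 1))) * Real.Gamma (N / p) /
        Real.Gamma (N / (p / (p - 1)) + N / p)) := by positivity
  have hV2 : (0:ℝ) < w ^ p *
      (b ^ (-((N + p / (p - 1)) / (p / (p - 1)))) / (p / (p - 1)) *
        (Real.Gamma ((N + p / (p - 1)) / (p / (p - 1))) * Real.Gamma (N / p - 1) /
          Real.Gamma ((N + p / (p - 1)) / (p / (p - 1)) + (N / p - 1)))) := by positivity
  have hω : (0:ℝ) < omegaN N := by
    rw [omegaN]
    exact div_pos (Real.rpow_pos_of_pos Real.pi_pos _)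
      (Real.Gamma_pos_of_pos (by linarith))
  have hσ : (0:ℝ) < N * omegaN N := by positivity
  have hEucl : (0:ℝ) < Eucl N p := by
    rw [Eucl]
    have h1 : (0:ℝ) < N + 1 - N / p := by
      have : N / p < N := div_lt_self hN0 hp1
      linarith
    have h2 : (0:ℝ) < Real.Gamma (N + 1) / (N * omegaN N * Real.Gamma (N / p)
        * Real.Gamma (N + 1 - N / p)) :=
      div_pos (Real.Gamma_pos_of_pos (by linarith))
        (mul_pos (mul_pos hσ hB) (Real.Gamma_pos_of_pos h1))
    have h3 : (0:ℝ) < N * (p - 1) / (N - p) := by positivity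
    exact mul_pos (mul_pos (by positivity) (Real.rpow_pos_of_pos h3 _))
      (Real.rpow_pos_of_pos h2 _)
  refine ⟨by rw [hI1]; exact ENNReal.ofReal_ne_top,
    by rw [hI2]; exact ENNReal.ofReal_ne_top, ?_⟩
  rw [hI1, hI2, ← ENNReal.ofReal_mul hσ.le, ← ENNReal.ofReal_mul hσ.le,
    ENNReal.ofReal_rpow_of_pos (mul_pos hσ hV1),
    ENNReal.ofReal_rpow_of_pos (mul_pos hσ hV2),
    ← ENNReal.ofReal_mul hEucl.le]
  exact congrArg ENNReal.ofReal (real_identity N p b hN hp1 hpN hb)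
end

section
/- For every real q > 2 there exists a constant C_q ≥ 0 such that for all t ∈ ℝ: | |1+t|^q − 1 − q·t − (q(q−1)/2)·t² | ≤ C_q · ( |t|^{min(3,q)} + |t|^q ). -/
private lemma hasDerivAt_one_add_rpow (p : ℝ) {s : ℝ} (hs : 0 < 1 + s) :
    HasDerivAt (fun x : ℝ => (1 + x) ^ p) (p * (1 + s) ^ (p - 1)) s := by
  have h1 : HasDerivAt (fun x : ℝ => 1 + x) 1 s := (hasDerivAt_id s).const_add 1
  have h2 := Real.hasDerivAt_rpow_const (p := p) (x := 1 + s) (Or.inl hs.ne')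
  exact (h2.comp s h1).congr_deriv (by simp)

private lemma rpow_bound_aux {x e : ℝ} (h1 : 1/2 ≤ x) (h2 : x ≤ 2) :
    x ^ e ≤ (2:ℝ) ^ e + (1/2:ℝ) ^ e := by
  rcases le_or_gt 0 e with he | he
  · have := Real.rpow_le_rpow (by linarith) h2 he
    have h3 : (0:ℝ) ≤ (1/2:ℝ) ^ e := Real.rpow_nonneg (by norm_num) e
    linarith
  · have := Real.rpow_le_rpow_of_nonpos (by norm_num) h1 he.le
    have h3 : (0:ℝ) ≤ (2:ℝ) ^ e := Real.rpow_nonneg (by norm_num) e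
    linarith

/-- For every real `q > 2` there is `C_q ≥ 0` such that for all `t ∈ ℝ`,
`| |1+t|^q − 1 − q·t − (q(q−1)/2)·t² | ≤ C_q (|t|^{min(3,q)} + |t|^q)`. -/
theorem abs_rpow_taylor_two (q : ℝ) (hq : 2 < q) :
    ∃ C : ℝ, 0 ≤ C ∧ ∀ t : ℝ,
      abs (|1 + t| ^ q - 1 - q * t - q * (q - 1) / 2 * t ^ 2) ≤
        C * (|t| ^ min 3 q + |t| ^ q) := by
  have hq0 : (0:ℝ) < q := by linarith
  set M : ℝ := |q * (q-1) * (q-2)| * ((2:ℝ) ^ (q-3) + (1/2:ℝ) ^ (q-3)) with hMdef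
  have hMnn : 0 ≤ M := by
    apply mul_nonneg (abs_nonneg _)
    have := Real.rpow_nonneg (by norm_num : (0:ℝ) ≤ 2) (q-3)
    have := Real.rpow_nonneg (by norm_num : (0:ℝ) ≤ 1/2) (q-3)
    linarith
  set B : ℝ := (3:ℝ)^q + (2:ℝ)^q + q*(2:ℝ)^q + q*(q-1)/2*(2:ℝ)^q with hBdef
  have h2q : (0:ℝ) ≤ (2:ℝ)^q := Real.rpow_nonneg (by norm_num) q
  have h3q : (0:ℝ) ≤ (3:ℝ)^q := Real.rpow_nonneg (by norm_num) q
  have hBnn : 0 ≤ B := by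
    have : 0 ≤ q*(2:ℝ)^q := mul_nonneg hq0.le h2q
    have : 0 ≤ q*(q-1)/2*(2:ℝ)^q := mul_nonneg (by nlinarith) h2q
    simp only [hBdef]; linarith
  refine ⟨M + B, by linarith, ?_⟩
  intro t
  have hminq : 0 < min 3 q := by
    rcases min_cases (3:ℝ) q with ⟨h, _⟩ | ⟨h, _⟩ <;> rw [h] <;> linarith
  rcases eq_or_ne t 0 with rfl | ht0
  · simp [Real.one_rpow, Real.zero_rpow hminq.ne', Real.zero_rpow hq0.ne']
  have htabs : 0 < |t| := abs_pos.mpr ht0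
  have hT1 : 0 ≤ |t| ^ min 3 q := Real.rpow_nonneg (abs_nonneg t) _
  have hT2 : 0 ≤ |t| ^ q := Real.rpow_nonneg (abs_nonneg t) _
  rcases le_or_gt |t| (1/2) with hsm | hbig
  · -- small case
    set r := |t| with hr
    set D := Set.Icc (-r) r with hD
    have hconv : Convex ℝ D := convex_Icc _ _
    have h0D : (0:ℝ) ∈ D := ⟨by linarith, by linarith⟩
    have htD : t ∈ D := ⟨neg_abs_le t, le_abs_self t⟩
    have hposD : ∀ s ∈ D, 1/2 ≤ 1 + s ∧ 1 + s ≤ 2 := by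
      rintro s ⟨hs1, hs2⟩
      constructor <;> [linarith; linarith]
    -- third derivative bound on second derivative function
    have hd3 : ∀ s ∈ D, HasDerivWithinAt
        (fun x : ℝ => q*(q-1)*(1+x)^(q-2) - q*(q-1))
        (q*(q-1)*(q-2)*(1+s)^(q-3)) D s := by
      intro s hs
      have hp : 0 < 1 + s := by have := hposD s hs; linarith [this.1]
      have h := ((hasDerivAt_one_add_rpow (q-2) hp).const_mul (q*(q-1))).sub_const (q*(q-1))
      have he : q - 2 - 1 = q - 3 := by ring
      rw [he] at h
      exact (h.congr_deriv (by ring)).hasDerivWithinAt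
    have hb3 : ∀ s ∈ D, ‖q*(q-1)*(q-2)*(1+s)^(q-3)‖ ≤ M := by
      intro s hs
      obtain ⟨hs1, hs2⟩ := hposD s hs
      rw [Real.norm_eq_abs, abs_mul, abs_of_nonneg (Real.rpow_nonneg (by linarith) _)]
      exact mul_le_mul_of_nonneg_left (rpow_bound_aux hs1 hs2) (abs_nonneg _)
    have step2 : ∀ s ∈ D, |q*(q-1)*(1+s)^(q-2) - q*(q-1)| ≤ M * r := by
      intro s hs
      have := hconv.norm_image_sub_le_of_norm_hasDerivWithin_le hd3 hb3 h0D hs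
      simp only [Real.norm_eq_abs, sub_zero] at this
      have h0 : q*(q-1)*(1+(0:ℝ))^(q-2) - q*(q-1) = 0 := by
        norm_num [Real.one_rpow]
      rw [h0, sub_zero] at this
      calc |q*(q-1)*(1+s)^(q-2) - q*(q-1)| ≤ M * |s| := this
        _ ≤ M * r := mul_le_mul_of_nonneg_left (abs_le.mpr ⟨hs.1, hs.2⟩) hMnn
    have hd2 : ∀ s ∈ D, HasDerivWithinAt
        (fun x : ℝ => q*(1+x)^(q-1) - q - q*(q-1)*x)
        (q*(q-1)*(1+s)^(q-2) - q*(q-1)) D s := by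
      intro s hs
      have hp : 0 < 1 + s := by have := hposD s hs; linarith [this.1]
      have h1 := ((hasDerivAt_one_add_rpow (q-1) hp).const_mul q).sub_const q
      have h2 : HasDerivAt (fun x : ℝ => q*(q-1)*x) (q*(q-1)) s := by
        simpa using (hasDerivAt_id s).const_mul (q*(q-1))
      have he : q - 1 - 1 = q - 2 := by ring
      rw [he] at h1
      exact ((h1.sub h2).congr_deriv (by ring)).hasDerivWithinAt
    have step1 : ∀ s ∈ D, |q*(1+s)^(q-1) - q - q*(q-1)*s| ≤ M * r * r := by
      intro s hs
      have := hconv.norm_image_sub_le_of_norm_hasDerivWithin_le hd2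
        (fun s hs => by simpa [Real.norm_eq_abs] using step2 s hs) h0D hs
      simp only [Real.norm_eq_abs, sub_zero] at this
      have h0 : q*(1+(0:ℝ))^(q-1) - q - q*(q-1)*0 = 0 := by
        norm_num [Real.one_rpow]
      rw [h0, sub_zero] at this
      calc |q*(1+s)^(q-1) - q - q*(q-1)*s| ≤ M * r * |s| := this
        _ ≤ M * r * r := mul_le_mul_of_nonneg_left (abs_le.mpr ⟨hs.1, hs.2⟩)
            (mul_nonneg hMnn (abs_nonneg t))
    have hd1 : ∀ s ∈ D, HasDerivWithinAt
        (fun x : ℝ => (1+x)^q - 1 - q*x - q*(q-1)/2*x^2)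
        (q*(1+s)^(q-1) - q - q*(q-1)*s) D s := by
      intro s hs
      have hp : 0 < 1 + s := by have := hposD s hs; linarith [this.1]
      have h1 := (hasDerivAt_one_add_rpow q hp).sub_const 1
      have h2 : HasDerivAt (fun x : ℝ => q*x) q s := by
        simpa using (hasDerivAt_id s).const_mul q
      have h3 : HasDerivAt (fun x : ℝ => q*(q-1)/2*x^2) (q*(q-1)*s) s := by
        have := (hasDerivAt_pow 2 s).const_mul (q*(q-1)/2)
        refine this.congr_deriv ?_
        push_cast; ring
      exact (((h1.sub h2).sub h3).congr_deriv (by ring)).hasDerivWithinAt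
    have step0 : |(1+t)^q - 1 - q*t - q*(q-1)/2*t^2| ≤ M * r * r * r := by
      have := hconv.norm_image_sub_le_of_norm_hasDerivWithin_le hd1
        (fun s hs => by simpa [Real.norm_eq_abs] using step1 s hs) h0D htD
      simp only [Real.norm_eq_abs, sub_zero] at this
      have h0 : (1+(0:ℝ))^q - 1 - q*0 - q*(q-1)/2*0^2 = 0 := by
        norm_num [Real.one_rpow]
      rw [h0, sub_zero] at this
      exact this
    have habs : |1 + t| = 1 + t := abs_of_pos (by linarith [neg_abs_le t])
    rw [habs]
    have hrrr : r * r * r = r ^ (3:ℝ) := by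
      rw [show (3:ℝ) = ((3:ℕ):ℝ) by norm_num, Real.rpow_natCast]
      ring
    have hmono : r ^ (3:ℝ) ≤ r ^ min 3 q := by
      apply Real.rpow_le_rpow_of_exponent_ge htabs (by linarith) (min_le_left 3 q)
    calc |(1+t)^q - 1 - q*t - q*(q-1)/2*t^2| ≤ M * (r*r*r) := by
          have := step0; linarith [step0]
      _ ≤ M * (r ^ min 3 q) := by
          rw [hrrr] at *; exact mul_le_mul_of_nonneg_left hmono hMnn
      _ ≤ (M + B) * (r ^ min 3 q + r ^ q) := by nlinarith
  · -- big case
    have h2t : (1:ℝ) ≤ 2 * |t| := by linarith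
    have e1 : |1+t| ^ q ≤ (3:ℝ)^q * |t|^q := by
      have h1t : |1+t| ≤ 3 * |t| := by
        calc |1+t| ≤ |(1:ℝ)| + |t| := abs_add_le 1 t
          _ ≤ 3 * |t| := by rw [abs_one]; linarith
      calc |1+t| ^ q ≤ (3*|t|) ^ q := Real.rpow_le_rpow (abs_nonneg _) h1t hq0.le
        _ = (3:ℝ)^q * |t|^q := Real.mul_rpow (by norm_num) (abs_nonneg t)
    have e2 : (1:ℝ) ≤ (2:ℝ)^q * |t|^q := by
      calc (1:ℝ) = (1:ℝ)^q := (Real.one_rpow q).symm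
        _ ≤ (2*|t|)^q := Real.rpow_le_rpow zero_le_one h2t hq0.le
        _ = (2:ℝ)^q * |t|^q := Real.mul_rpow (by norm_num) (abs_nonneg t)
    have e3 : |t| ≤ (2:ℝ)^q * |t|^q := by
      calc |t| ≤ 2*|t| := by linarith
        _ = (2*|t|)^(1:ℝ) := (Real.rpow_one _).symm
        _ ≤ (2*|t|)^q := Real.rpow_le_rpow_of_exponent_le h2t (by linarith)
        _ = (2:ℝ)^q * |t|^q := Real.mul_rpow (by norm_num) (abs_nonneg t)
    have e4 : t^2 ≤ (2:ℝ)^q * |t|^q := by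
      calc t^2 = |t|^2 := (sq_abs t).symm
        _ ≤ (2*|t|)^2 := by nlinarith [abs_nonneg t]
        _ = (2*|t|)^((2:ℕ):ℝ) := by rw [Real.rpow_natCast]
        _ ≤ (2*|t|)^q := Real.rpow_le_rpow_of_exponent_le h2t (by push_cast; linarith)
        _ = (2:ℝ)^q * |t|^q := Real.mul_rpow (by norm_num) (abs_nonneg t)
    have e3' : q * |t| ≤ q * ((2:ℝ)^q * |t|^q) := mul_le_mul_of_nonneg_left e3 hq0.le
    have e4' : q*(q-1)/2 * t^2 ≤ q*(q-1)/2 * ((2:ℝ)^q * |t|^q) :=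
      mul_le_mul_of_nonneg_left e4 (by nlinarith)
    have hanb : 0 ≤ |1+t|^q := Real.rpow_nonneg (abs_nonneg _) q
    have hqt1 : q*t ≤ q*|t| := mul_le_mul_of_nonneg_left (le_abs_self t) hq0.le
    have hqt2 : q*(-|t|) ≤ q*t := mul_le_mul_of_nonneg_left (neg_abs_le t) hq0.le
    have hct : 0 ≤ q*(q-1)/2*t^2 := mul_nonneg (by nlinarith) (sq_nonneg t)
    have hp2 : 0 ≤ (2:ℝ)^q*|t|^q := mul_nonneg h2q hT2
    have hp3 : 0 ≤ (3:ℝ)^q*|t|^q := mul_nonneg h3q hT2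
    have hstep : |(|1+t|)^q - 1 - q*t - q*(q-1)/2*t^2| ≤ B * |t|^q := by
      rw [abs_le]
      constructor
      · simp only [hBdef]
        linarith [e1, e2, e3', e4', hqt1, hqt2, hct, hp2, hp3]
      · simp only [hBdef]
        linarith [e1, e2, e3', e4', hqt1, hqt2, hct, hp2, hp3]
    calc |(|1+t|)^q - 1 - q*t - q*(q-1)/2*t^2| ≤ B * |t|^q := hstep
      _ ≤ (M + B) * (|t| ^ min 3 q + |t|^q) := by
          have hexp : (M+B)*(|t| ^ min 3 q + |t|^q)
              = M*(|t| ^ min 3 q) + M*(|t|^q) + B*(|t| ^ min 3 q) + B*(|t|^q) := by ring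
          have h1 := mul_nonneg hMnn hT1
          have h2 := mul_nonneg hMnn hT2
          have h3 := mul_nonneg hBnn hT1
          linarith
end

section
/- For every real p > 1 there exists a constant C_p ≥ 0 such that for all a, b ∈ ℝ: | |a + |b||^p − |b|^p − p·a·|b|^{p−1} | ≤ C_p · ( |a|^{min(p,2)} · |b|^{p − min(p,2)} + |a|^p ). -/
open Real

/-- For every real `p > 1` there is `C_p ≥ 0` such that for all `a, b ∈ ℝ`,
`| |a+|b||^p − |b|^p − p·a·|b|^{p−1} | ≤ C_p (|a|^{min(p,2)} |b|^{p−min(p,2)} + |a|^p)`. -/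
theorem abs_rpow_taylor_one (p : ℝ) (hp : 1 < p) :
    ∃ C : ℝ, 0 ≤ C ∧ ∀ a b : ℝ,
      abs (abs (a + |b|) ^ p - |b| ^ p - p * a * |b| ^ (p - 1)) ≤
        C * (|a| ^ min p 2 * |b| ^ (p - min p 2) + |a| ^ p) := by
  have hp0 : (0:ℝ) < p := lt_trans one_pos hp
  set q := min p 2 with hqdef
  have hqp : q ≤ p := min_le_left _ _
  have hq2 : q ≤ 2 := min_le_right _ _
  set K : ℝ := (p - 1) * ((1/2 : ℝ) ^ (p - 2) + (3/2 : ℝ) ^ (p - 2)) with hKdef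
  have hK0 : 0 ≤ K := mul_nonneg (by linarith) (by positivity)
  refine ⟨3 ^ p + 2 ^ p + p * 2 ^ (p - 1) + p * K, by positivity, fun a b => ?_⟩
  set t := |b| with htdef
  have ht : 0 ≤ t := abs_nonneg b
  have ha0 : 0 ≤ |a| := abs_nonneg a
  have hRHS1 : 0 ≤ |a| ^ q * t ^ (p - q) := by positivity
  have hRHS2 : 0 ≤ |a| ^ p := by positivity
  have hRHS : 0 ≤ (3 ^ p + 2 ^ p + p * 2 ^ (p - 1) + p * K) *
      (|a| ^ q * t ^ (p - q) + |a| ^ p) := by positivity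
  rcases eq_or_ne a 0 with rfl | hane
  · simpa [abs_of_nonneg ht] using hRHS
  have ha : 0 < |a| := abs_pos.mpr hane
  rcases le_or_gt t (2 * |a|) with hcase | hcase
  · -- crude case : t ≤ 2|a|
    have h1 : |a + t| ^ p ≤ 3 ^ p * |a| ^ p := by
      rw [← Real.mul_rpow (by norm_num) ha0]
      apply Real.rpow_le_rpow (abs_nonneg _) ?_ hp0.le
      calc |a + t| ≤ |a| + |t| := abs_add_le a t
        _ = |a| + t := by rw [abs_of_nonneg ht]
        _ ≤ 3 * |a| := by linarith
    have h2 : t ^ p ≤ 2 ^ p * |a| ^ p := by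
      rw [← Real.mul_rpow (by norm_num) ha0]
      exact Real.rpow_le_rpow ht hcase hp0.le
    have h3 : |p * a * t ^ (p - 1)| ≤ p * 2 ^ (p - 1) * |a| ^ p := by
      have e1 : |p * a * t ^ (p - 1)| = p * |a| * t ^ (p - 1) := by
        rw [abs_mul, abs_mul, abs_of_pos hp0,
          abs_of_nonneg (Real.rpow_nonneg ht _)]
      rw [e1]
      have h4 : t ^ (p - 1) ≤ 2 ^ (p - 1) * |a| ^ (p - 1) := by
        rw [← Real.mul_rpow (by norm_num) ha0]
        exact Real.rpow_le_rpow ht hcase (by linarith)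
      have h5 : p * |a| * t ^ (p - 1) ≤ p * |a| * (2 ^ (p - 1) * |a| ^ (p - 1)) := by
        apply mul_le_mul_of_nonneg_left h4 (by positivity)
      refine h5.trans (le_of_eq ?_)
      have : |a| * |a| ^ (p - 1) = |a| ^ p := by
        nth_rewrite 1 [← Real.rpow_one |a|]
        rw [← Real.rpow_add ha, show (1:ℝ) + (p - 1) = p by ring]
      calc p * |a| * (2 ^ (p - 1) * |a| ^ (p - 1))
          = p * 2 ^ (p - 1) * (|a| * |a| ^ (p - 1)) := by ring
        _ = p * 2 ^ (p - 1) * |a| ^ p := by rw [this]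
    have h0 : 0 ≤ |a + t| ^ p := Real.rpow_nonneg (abs_nonneg _) _
    have h0' : 0 ≤ t ^ p := Real.rpow_nonneg ht _
    have hZ := abs_le.mp h3
    have hmain : |(|a + t|) ^ p - t ^ p - p * a * t ^ (p - 1)| ≤
        (3 ^ p + 2 ^ p + p * 2 ^ (p - 1)) * |a| ^ p := by
      rw [abs_le]
      constructor <;> nlinarith
    refine hmain.trans ?_
    nlinarith [mul_nonneg (mul_nonneg hp0.le hK0) hRHS2,
      mul_nonneg (by positivity : (0:ℝ) ≤ 3 ^ p + 2 ^ p + p * 2 ^ (p - 1) + p * K) hRHS1]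
  · -- Taylor case : 2|a| < t
    have ht0 : 0 < t := lt_of_le_of_lt (by positivity) hcase
    have hat : |a| < t / 2 := by linarith
    -- Lipschitz estimate for x ↦ x^(p-1) on [t/2, 3t/2]
    set s : Set ℝ := Set.Icc (t / 2) (3 * t / 2) with hsdef
    have hspos : ∀ x ∈ s, 0 < x := fun x hx => lt_of_lt_of_le (by linarith) hx.1
    have hderiv : ∀ x ∈ s, HasDerivWithinAt (fun y : ℝ => y ^ (p - 1))
        ((p - 1) * x ^ (p - 2)) s x := by
      intro x hx
      have := (Real.hasDerivAt_rpow_const (p := p - 1)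
        (Or.inl (ne_of_gt (hspos x hx)))).hasDerivWithinAt (s := s)
      simpa [show p - 1 - 1 = p - 2 by ring] using this
    have hbound : ∀ x ∈ s, ‖(p - 1) * x ^ (p - 2)‖ ≤ K * t ^ (p - 2) := by
      intro x hx
      have hxpos := hspos x hx
      have hx2 : x ^ (p - 2) ≤ (t / 2) ^ (p - 2) + (3 * t / 2) ^ (p - 2) := by
        rcases le_or_gt (p - 2) 0 with hpe | hpe
        · have := Real.rpow_le_rpow_of_nonpos (by linarith : (0:ℝ) < t / 2) hx.1 hpe
          have h2 : (0:ℝ) ≤ (3 * t / 2) ^ (p - 2) := Real.rpow_nonneg (by linarith) _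
          linarith
        · have := Real.rpow_le_rpow hxpos.le hx.2 hpe.le
          have h2 : (0:ℝ) ≤ (t / 2) ^ (p - 2) := Real.rpow_nonneg (by linarith) _
          linarith
      have e1 : (t / 2) ^ (p - 2) = (1/2 : ℝ) ^ (p - 2) * t ^ (p - 2) := by
        rw [← Real.mul_rpow (by norm_num) ht]; congr 1; ring
      have e2 : (3 * t / 2) ^ (p - 2) = (3/2 : ℝ) ^ (p - 2) * t ^ (p - 2) := by
        rw [← Real.mul_rpow (by norm_num) ht]; congr 1; ring
      rw [Real.norm_eq_abs, abs_mul, abs_of_pos (by linarith : (0:ℝ) < p - 1),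
        abs_of_nonneg (Real.rpow_nonneg hxpos.le _), hKdef]
      calc (p - 1) * x ^ (p - 2)
          ≤ (p - 1) * ((t / 2) ^ (p - 2) + (3 * t / 2) ^ (p - 2)) :=
            mul_le_mul_of_nonneg_left hx2 (by linarith)
        _ = (p - 1) * ((1/2 : ℝ) ^ (p - 2) + (3/2 : ℝ) ^ (p - 2)) * t ^ (p - 2) := by
            rw [e1, e2]; ring
    have hlip : ∀ x ∈ s, ∀ y ∈ s,
        |x ^ (p - 1) - y ^ (p - 1)| ≤ K * t ^ (p - 2) * |x - y| := by
      intro x hx y hy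
      have := (convex_Icc (t / 2) (3 * t / 2)).norm_image_sub_le_of_norm_hasDerivWithin_le
        hderiv hbound hy hx
      simpa [Real.norm_eq_abs] using this
    -- second MVT for h(u) = (t+u)^p - p*u*t^(p-1) on [-|a|, |a|]
    set s2 : Set ℝ := Set.Icc (-|a|) |a| with hs2def
    have hmem : ∀ u ∈ s2, t + u ∈ s := by
      intro u hu
      obtain ⟨h1, h2⟩ := hu
      exact ⟨by linarith, by linarith⟩
    have hts : t ∈ s := ⟨by linarith, by linarith⟩
    have hderiv2 : ∀ u ∈ s2, HasDerivWithinAt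
        (fun u : ℝ => (t + u) ^ p - p * u * t ^ (p - 1))
        (p * (t + u) ^ (p - 1) - p * t ^ (p - 1)) s2 u := by
      intro u hu
      have htu : 0 < t + u := hspos _ (hmem u hu)
      have h1 : HasDerivAt (fun u : ℝ => t + u) 1 u := (hasDerivAt_id u).const_add t
      have h2 : HasDerivAt (fun u : ℝ => (t + u) ^ p) (p * (t + u) ^ (p - 1) * 1) u :=
        (Real.hasDerivAt_rpow_const (Or.inl (ne_of_gt htu))).comp u h1
      have h3 : HasDerivAt (fun u : ℝ => p * u * t ^ (p - 1)) (p * t ^ (p - 1)) u := by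
        have heq : (fun u : ℝ => p * u * t ^ (p - 1)) =
            fun u : ℝ => (p * t ^ (p - 1)) * u := by funext v; ring
        rw [heq]
        simpa using (hasDerivAt_id u).const_mul (p * t ^ (p - 1))
      have := (h2.sub h3)
      rw [mul_one] at this
      exact this.hasDerivWithinAt
    have hbound2 : ∀ u ∈ s2, ‖p * (t + u) ^ (p - 1) - p * t ^ (p - 1)‖ ≤
        p * (K * t ^ (p - 2)) * |a| := by
      intro u hu
      have h1 := hlip (t + u) (hmem u hu) t hts
      rw [Real.norm_eq_abs, ← mul_sub, abs_mul, abs_of_pos hp0]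
      have h2 : |t + u - t| = |u| := by congr 1; ring
      rw [h2] at h1
      have h3 : |u| ≤ |a| := abs_le.mpr ⟨hu.1, hu.2⟩
      have h4 : |(t + u) ^ (p - 1) - t ^ (p - 1)| ≤ K * t ^ (p - 2) * |a| := by
        refine h1.trans (mul_le_mul_of_nonneg_left h3 (by positivity))
      calc p * |(t + u) ^ (p - 1) - t ^ (p - 1)| ≤ p * (K * t ^ (p - 2) * |a|) :=
            mul_le_mul_of_nonneg_left h4 hp0.le
        _ = p * (K * t ^ (p - 2)) * |a| := by ring
    have hmem0 : (0:ℝ) ∈ s2 := ⟨by linarith, ha0⟩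
    have hmema : a ∈ s2 := ⟨neg_abs_le a, le_abs_self a⟩
    have hmvt := (convex_Icc (-|a|) |a|).norm_image_sub_le_of_norm_hasDerivWithin_le
      hderiv2 hbound2 hmem0 hmema
    simp only [Real.norm_eq_abs, sub_zero, mul_zero, zero_mul, add_zero] at hmvt
    -- rewrite goal
    have habs : |a + t| = a + t := abs_of_pos (by linarith [neg_abs_le a])
    have hgoal_eq : |(|a + t|) ^ p - t ^ p - p * a * t ^ (p - 1)| =
        |(t + a) ^ p - p * a * t ^ (p - 1) - t ^ p| := by
      rw [habs, add_comm a t]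
      congr 1
      ring
    rw [hgoal_eq]
    refine hmvt.trans ?_
    -- now : p * (K * t^(p-2)) * |a| * |a| ≤ C * (...)
    have e1 : |a| * |a| = |a| ^ q * |a| ^ (2 - q) := by
      rw [← Real.rpow_add ha, show q + (2 - q) = 2 by ring,
        show (2:ℝ) = ((2:ℕ):ℝ) by norm_num, Real.rpow_natCast]
      ring
    have e2 : |a| ^ (2 - q) ≤ t ^ (2 - q) :=
      Real.rpow_le_rpow ha0 (by linarith) (by linarith)
    have e3 : t ^ (p - 2) * t ^ (2 - q) = t ^ (p - q) := by
      rw [← Real.rpow_add ht0]; congr 1; ring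
    have key : p * (K * t ^ (p - 2)) * |a| * |a| ≤ p * K * (|a| ^ q * t ^ (p - q)) := by
      calc p * (K * t ^ (p - 2)) * |a| * |a|
          = p * K * (t ^ (p - 2) * (|a| * |a|)) := by ring
        _ = p * K * (t ^ (p - 2) * (|a| ^ q * |a| ^ (2 - q))) := by rw [e1]
        _ ≤ p * K * (t ^ (p - 2) * (|a| ^ q * t ^ (2 - q))) := by
            apply mul_le_mul_of_nonneg_left ?_ (by positivity)
            apply mul_le_mul_of_nonneg_left ?_ (Real.rpow_nonneg ht _)
            exact mul_le_mul_of_nonneg_left e2 (Real.rpow_nonneg ha0 _)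
        _ = p * K * (|a| ^ q * (t ^ (p - 2) * t ^ (2 - q))) := by ring
        _ = p * K * (|a| ^ q * t ^ (p - q)) := by rw [e3]
    refine key.trans ?_
    have hA : (0:ℝ) ≤ 3 ^ p + 2 ^ p + p * 2 ^ (p - 1) := by positivity
    have h1 := mul_nonneg hA hRHS1
    have h2 := mul_nonneg hA hRHS2
    have h3 : 0 ≤ p * K * |a| ^ p := mul_nonneg (mul_nonneg hp0.le hK0) hRHS2
    have expand : (3 ^ p + 2 ^ p + p * 2 ^ (p - 1) + p * K) *
          (|a| ^ q * t ^ (p - q) + |a| ^ p)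
        = (3 ^ p + 2 ^ p + p * 2 ^ (p - 1)) * (|a| ^ q * t ^ (p - q))
          + (3 ^ p + 2 ^ p + p * 2 ^ (p - 1)) * |a| ^ p
          + p * K * (|a| ^ q * t ^ (p - q)) + p * K * |a| ^ p := by ring
    linarith
end

section
/- For every real q > 2 there exists a constant C_q ≥ 0 such that the following holds. Let (X, 𝔪) be a measure space with 𝔪(X) = 1 and let f ∈ L²(𝔪) ∩ L^q(𝔪) satisfy ∫ f d𝔪 = 0. Then | (∫ |1+f|^q d𝔪)^{2/q} − ∫ (1+f)² d𝔪 − (q−2) ∫ f² d𝔪 | ≤ C_q · ( ∫ (|f|^{min(3,q)} + |f|^q) d𝔪 + (∫ |f|^q d𝔪)² + (∫ f² d𝔪)² ). -/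
open MeasureTheory

section Aux
open Real Set

/-- |exp y - 1| ≤ |y| exp|y| -/
private lemma sl_exp_sub_one_abs_le (y : ℝ) : |Real.exp y - 1| ≤ |y| * Real.exp |y| := by
  rcases le_or_gt 0 y with h | h
  · rw [abs_of_nonneg h, abs_of_nonneg (by linarith [Real.one_le_exp h] : (0:ℝ) ≤ Real.exp y - 1)]
    have h1 : 1 - y ≤ Real.exp (-y) := by linarith [Real.add_one_le_exp (-y)]
    have h2 : Real.exp (-y) * Real.exp y = 1 := by
      rw [← Real.exp_add]; simp
    nlinarith [Real.exp_pos y, Real.exp_pos (-y)]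
  · have h1 : Real.exp y ≤ 1 := Real.exp_le_one_iff.mpr h.le
    rw [abs_of_neg h, abs_of_nonpos (by linarith : Real.exp y - 1 ≤ 0)]
    have := Real.add_one_le_exp y
    nlinarith [Real.exp_pos (-y), Real.one_le_exp (le_of_lt (neg_pos.mpr h))]

/-- |log d| ≤ 2|d-1| for d ≥ 1/2 -/
private lemma sl_abs_log_le (d : ℝ) (hd : 1/2 ≤ d) : |Real.log d| ≤ 2 * |d - 1| := by
  have hd0 : 0 < d := by linarith
  rcases le_or_gt 1 d with h | h
  · rw [abs_of_nonneg (Real.log_nonneg h), abs_of_nonneg (by linarith)]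
    linarith [Real.log_le_sub_one_of_pos hd0]
  · rw [abs_of_nonpos (Real.log_nonpos hd0.le h.le), abs_of_nonpos (by linarith)]
    have := Real.log_le_sub_one_of_pos (show (0:ℝ) < 1/d by positivity)
    rw [Real.log_div one_ne_zero hd0.ne', Real.log_one] at this
    have : -Real.log d ≤ 1/d - 1 := by linarith
    have h2 : 1/d - 1 ≤ 2*(1-d) := by
      rw [div_sub' hd0.ne', div_le_iff₀ hd0]; nlinarith
    linarith

/-- |d^s - 1| ≤ 2 exp|s| |s| |d-1| on [1/2,3/2] -/
private lemma sl_rpow_near_one (s d : ℝ) (hd : d ∈ Icc (1/2:ℝ) (3/2)) :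
    |d ^ s - 1| ≤ 2 * Real.exp |s| * |s| * |d - 1| := by
  obtain ⟨h1, h2⟩ := hd
  have hd0 : 0 < d := by linarith
  rw [Real.rpow_def_of_pos hd0]
  have hlog := sl_abs_log_le d h1
  have hlog1 : |Real.log d| ≤ 1 := by
    have : |d - 1| ≤ 1/2 := abs_le.mpr ⟨by linarith, by linarith⟩
    linarith
  calc |Real.exp (Real.log d * s) - 1| ≤ |Real.log d * s| * Real.exp |Real.log d * s| :=
        sl_exp_sub_one_abs_le _
    _ ≤ (2 * |d - 1| * |s|) * Real.exp |s| := by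
        have habs : |Real.log d * s| = |Real.log d| * |s| := abs_mul _ _
        have h3 : |Real.log d| * |s| ≤ 2 * |d-1| * |s| :=
          mul_le_mul_of_nonneg_right hlog (abs_nonneg s)
        have h4 : Real.exp (|Real.log d| * |s|) ≤ Real.exp |s| := by
          apply Real.exp_le_exp.mpr
          calc |Real.log d| * |s| ≤ 1 * |s| := mul_le_mul_of_nonneg_right hlog1 (abs_nonneg s)
            _ = |s| := one_mul _
        rw [habs]
        exact mul_le_mul h3 h4 (Real.exp_pos _).le (by positivity)
    _ = 2 * Real.exp |s| * |s| * |d - 1| := by ring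

/-- MVT on the interval [1/2,3/2], with endpoints 1 and x -/
private lemma sl_mvt_one {g g' : ℝ → ℝ}
    (hder : ∀ y ∈ Icc (1/2:ℝ) (3/2), HasDerivAt g (g' y) y)
    (x : ℝ) (hx : x ∈ Icc (1/2:ℝ) (3/2)) :
    ∃ c ∈ Icc (1/2:ℝ) (3/2), |c - 1| ≤ |x - 1| ∧ g x - g 1 = g' c * (x - 1) := by
  have h1 : (1:ℝ) ∈ Icc (1/2:ℝ) (3/2) := by constructor <;> norm_num
  obtain ⟨hxl, hxr⟩ := hx
  rcases lt_trichotomy x 1 with h | h | h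
  · have hsub : Icc x 1 ⊆ Icc (1/2:ℝ) (3/2) := Icc_subset_Icc hxl (by norm_num)
    obtain ⟨c, hc, hc'⟩ := exists_hasDerivAt_eq_slope g g' h
      (fun y hy => (hder y (hsub hy)).continuousAt.continuousWithinAt)
      (fun y hy => hder y (hsub (Ioo_subset_Icc_self hy)))
    refine ⟨c, hsub (Ioo_subset_Icc_self hc), ?_, ?_⟩
    · rw [abs_of_nonpos (by linarith [hc.2] : c - 1 ≤ 0),
        abs_of_nonpos (by linarith : x - 1 ≤ 0)]
      linarith [hc.1]
    · have hne : (1:ℝ) - x ≠ 0 := by linarith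
      field_simp at hc'
      linarith [hc']
  · subst h; exact ⟨1, h1, by simp, by simp⟩
  · have hsub : Icc 1 x ⊆ Icc (1/2:ℝ) (3/2) := Icc_subset_Icc (by norm_num) hxr
    obtain ⟨c, hc, hc'⟩ := exists_hasDerivAt_eq_slope g g' h
      (fun y hy => (hder y (hsub hy)).continuousAt.continuousWithinAt)
      (fun y hy => hder y (hsub (Ioo_subset_Icc_self hy)))
    refine ⟨c, hsub (Ioo_subset_Icc_self hc), ?_, ?_⟩
    · rw [abs_of_nonneg (by linarith [hc.1] : (0:ℝ) ≤ c - 1),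
        abs_of_nonneg (by linarith : (0:ℝ) ≤ x - 1)]
      linarith [hc.2]
    · have hne : x - (1:ℝ) ≠ 0 := by linarith
      field_simp at hc'
      linarith [hc']

/-- first-order Taylor bound for rpow on [1/2,3/2] -/
private lemma sl_rpow_taylor1 (p x : ℝ) (hx : x ∈ Icc (1/2:ℝ) (3/2)) :
    |x ^ p - 1 - p * (x - 1)| ≤ (2 * Real.exp |p-1| * |p| * |p-1|) * (x-1)^2 := by
  have hder : ∀ y ∈ Icc (1/2:ℝ) (3/2), HasDerivAt (fun t : ℝ => t ^ p - p * t)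
      (p * y ^ (p-1) - p) y := by
    intro y hy
    have hy0 : y ≠ 0 := by have := hy.1; intro h; rw [h] at this; linarith
    exact (Real.hasDerivAt_rpow_const (Or.inl hy0)).sub
      (by simpa using (hasDerivAt_id y).const_mul p)
  obtain ⟨c, hc, hc1, hc2⟩ := sl_mvt_one hder x hx
  have h1 : x ^ p - 1 - p * (x - 1) = p * (c ^ (p-1) - 1) * (x - 1) := by
    have hone : (1:ℝ) ^ p = 1 := Real.one_rpow p
    simp only [hone] at hc2
    nlinarith [hc2]
  rw [h1]
  have hb := sl_rpow_near_one (p-1) c hc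
  calc |p * (c ^ (p-1) - 1) * (x-1)| = |p| * |c ^ (p-1) - 1| * |x - 1| := by
        rw [abs_mul, abs_mul]
    _ ≤ |p| * (2 * Real.exp |p-1| * |p-1| * |x-1|) * |x-1| := by
        have h2 : |c ^ (p-1) - 1| ≤ 2 * Real.exp |p-1| * |p-1| * |x-1| :=
          hb.trans (mul_le_mul_of_nonneg_left hc1 (by positivity))
        have := mul_le_mul_of_nonneg_right
          (mul_le_mul_of_nonneg_left h2 (abs_nonneg p)) (abs_nonneg (x-1))
        linarith
    _ = (2 * Real.exp |p-1| * |p| * |p-1|) * |x-1|^2 := by ring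
    _ = (2 * Real.exp |p-1| * |p| * |p-1|) * (x-1)^2 := by rw [sq_abs]

/-- second-order Taylor bound for rpow on [1/2,3/2] -/
private lemma sl_rpow_taylor2 (p x : ℝ) (hx : x ∈ Icc (1/2:ℝ) (3/2)) :
    |x ^ p - 1 - p * (x - 1) - (p*(p-1)/2) * (x-1)^2| ≤
      (|p| * (2 * Real.exp |p-2| * |p-1| * |p-2|)) * |x-1|^3 := by
  set K := 2 * Real.exp |p-2| * |p-1| * |p-2| with hK
  have hder : ∀ y ∈ Icc (1/2:ℝ) (3/2), HasDerivAt
      (fun t : ℝ => t ^ p - p * t - (p*(p-1)/2) * (t-1)^2)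
      (p * y ^ (p-1) - p - p*(p-1)*(y-1)) y := by
    intro y hy
    have hy0 : y ≠ 0 := by have := hy.1; intro h; rw [h] at this; linarith
    have h1 : HasDerivAt (fun t : ℝ => (p*(p-1)/2) * (t-1)^2) (p*(p-1)*(y-1)) y := by
      have : HasDerivAt (fun t : ℝ => (t-1)^2) (2*(y-1)) y := by
        simpa using (((hasDerivAt_id y).sub_const 1).fun_pow 2)
      have := this.const_mul (p*(p-1)/2)
      exact this.congr_deriv (by ring)
    exact ((Real.hasDerivAt_rpow_const (Or.inl hy0)).sub
      (by simpa using (hasDerivAt_id y).const_mul p)).sub h1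
  obtain ⟨c, hc, hc1, hc2⟩ := sl_mvt_one hder x hx
  have hone : (1:ℝ) ^ p = 1 := Real.one_rpow p
  simp only [hone] at hc2
  have h1 : x ^ p - 1 - p * (x - 1) - (p*(p-1)/2)*(x-1)^2 =
      (p * (c ^ (p-1) - 1 - (p-1)*(c-1))) * (x - 1) := by nlinarith [hc2]
  rw [h1]
  have hb := sl_rpow_taylor1 (p-1) c hc
  have hb' : |c ^ (p-1) - 1 - (p-1)*(c-1)| ≤ K * (x-1)^2 := by
    refine hb.trans ?_
    rw [hK]
    have h3 : (c-1)^2 ≤ (x-1)^2 := by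
      have := sq_abs (c-1); have := sq_abs (x-1)
      nlinarith [abs_nonneg (c-1), abs_nonneg (x-1), hc1]
    have hp2 : p - 1 - 1 = p - 2 := by ring
    rw [hp2]
    exact mul_le_mul_of_nonneg_left h3 (by positivity)
  calc |p * (c ^ (p-1) - 1 - (p-1)*(c-1)) * (x-1)|
      = |p| * |c ^ (p-1) - 1 - (p-1)*(c-1)| * |x-1| := by rw [abs_mul, abs_mul]
    _ ≤ |p| * (K * (x-1)^2) * |x-1| := by
        have := mul_le_mul_of_nonneg_right
          (mul_le_mul_of_nonneg_left hb' (abs_nonneg p)) (abs_nonneg (x-1))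
        linarith
    _ = (|p| * K) * ((x-1)^2 * |x-1|) := by ring
    _ = (|p| * K) * |x-1|^3 := by rw [← sq_abs]; ring

/-- first-order bound for the outer power `A ↦ A^(2/q)` -/
private lemma sl_rpow_alpha (q : ℝ) (hq : 2 < q) : ∃ C2 : ℝ, 0 ≤ C2 ∧ ∀ A : ℝ, 0 ≤ A →
    |A ^ (2/q) - 1 - (2/q)*(A-1)| ≤ C2 * (A-1)^2 := by
  have hq0 : 0 < q := by linarith
  set α := 2/q with hα
  have hα0 : 0 < α := by positivity
  have hα1 : α < 1 := by rw [hα, div_lt_one hq0]; linarith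
  refine ⟨max (2 * Real.exp |α-1| * |α| * |α-1|) 12, le_max_of_le_right (by norm_num), ?_⟩
  intro A hA
  rcases le_or_gt (|A - 1|) (1/2) with h | h
  · have hAI : A ∈ Icc (1/2:ℝ) (3/2) := by
      rw [abs_le] at h; constructor <;> [linarith [h.1]; linarith [h.2]]
    calc |A ^ α - 1 - α*(A-1)| ≤ (2 * Real.exp |α-1| * |α| * |α-1|) * (A-1)^2 :=
          sl_rpow_taylor1 α A hAI
      _ ≤ max (2 * Real.exp |α-1| * |α| * |α-1|) 12 * (A-1)^2 :=
          mul_le_mul_of_nonneg_right (le_max_left _ _) (sq_nonneg _)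
  · have hAb : A ^ α ≤ 1 + |A - 1| := by
      rcases le_or_gt A 1 with hA1 | hA1
      · calc A ^ α ≤ 1 := Real.rpow_le_one hA hA1 hα0.le
          _ ≤ 1 + |A-1| := by linarith [abs_nonneg (A-1)]
      · calc A ^ α ≤ A ^ (1:ℝ) := Real.rpow_le_rpow_of_exponent_le hA1.le hα1.le
          _ = A := Real.rpow_one A
          _ ≤ 1 + |A-1| := by rw [abs_of_nonneg (by linarith : (0:ℝ) ≤ A - 1)]; linarith
    have hA0 : 0 ≤ A ^ α := Real.rpow_nonneg hA α
    have h1 : |A ^ α - 1 - α*(A-1)| ≤ A ^ α + 1 + |A-1| := by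
      have habs : |α*(A-1)| = α * |A-1| := by rw [abs_mul, abs_of_pos hα0]
      have h2 : α * |A-1| ≤ |A-1| := by nlinarith [abs_nonneg (A-1)]
      calc |A ^ α - 1 - α*(A-1)| ≤ |A ^ α - 1| + |α*(A-1)| := abs_sub _ _
        _ ≤ (A ^ α + 1) + |A-1| := by
            refine add_le_add ?_ (by rw [habs]; exact h2)
            calc |A ^ α - 1| ≤ |A ^ α| + 1 := by
                  have := abs_sub (A ^ α) (1:ℝ); simpa using this
              _ = A ^ α + 1 := by rw [abs_of_nonneg hA0]
        _ = A ^ α + 1 + |A-1| := by ring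
    have h3 : A ^ α + 1 + |A-1| ≤ 12 * (A-1)^2 := by
      have hone : 1 ≤ 2 * |A-1| := by linarith
      have hsq : |A-1| * |A-1| = (A-1)^2 := by rw [← sq_abs]; ring
      nlinarith [abs_nonneg (A-1), hAb]
    calc |A ^ α - 1 - α*(A-1)| ≤ 12 * (A-1)^2 := h1.trans h3
      _ ≤ max (2 * Real.exp |α-1| * |α| * |α-1|) 12 * (A-1)^2 :=
          mul_le_mul_of_nonneg_right (le_max_right _ _) (sq_nonneg _)

/-- pointwise second-order Taylor expansion of `|1+t|^q` -/
private lemma sl_pointwise_taylor (q : ℝ) (hq : 2 < q) : ∃ C1 : ℝ, 0 ≤ C1 ∧ ∀ t : ℝ,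
    |(|1+t|) ^ q - 1 - q*t - (q*(q-1)/2)*t^2| ≤ C1 * (|t| ^ min 3 q + |t| ^ q) := by
  have hq0 : 0 < q := by linarith
  set m := min 3 q with hm
  have hm2 : 2 < m := lt_min (by norm_num) hq
  have hm3 : m ≤ 3 := min_le_left _ _
  have hmq : m ≤ q := min_le_right _ _
  have hm0 : 0 < m := by linarith
  set K3 := |q| * (2 * Real.exp |q-2| * |q-1| * |q-2|) with hK3
  have hK3n : 0 ≤ K3 := by positivity
  refine ⟨K3 + 3 ^ q + 8 + 4*q + q*q, by positivity, ?_⟩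
  intro t
  have htmn : (0:ℝ) ≤ |t| ^ m := Real.rpow_nonneg (abs_nonneg t) m
  have htqn : (0:ℝ) ≤ |t| ^ q := Real.rpow_nonneg (abs_nonneg t) q
  rcases le_or_gt (|t|) (1/2) with h | h
  · -- |t| ≤ 1/2
    have ht1 : (0:ℝ) < 1 + t := by have := abs_le.mp h; linarith [this.1]
    have habs : |1 + t| = 1 + t := abs_of_pos ht1
    have hxI : 1 + t ∈ Icc (1/2:ℝ) (3/2) := by
      have := abs_le.mp h; constructor <;> [linarith [this.1]; linarith [this.2]]
    have hb := sl_rpow_taylor2 q (1+t) hxI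
    simp only [add_sub_cancel_left] at hb
    have hb' : |(|1+t|) ^ q - 1 - q*t - (q*(q-1)/2)*t^2| ≤ K3 * |t|^3 := by
      rw [habs]; exact le_of_le_of_eq hb (by rw [hK3])
    have h3m : |t|^3 ≤ |t| ^ m := by
      rcases eq_or_lt_of_le (abs_nonneg t) with h0 | h0
      · rw [← h0]
        rw [Real.zero_rpow hm0.ne']
        norm_num
      · have : |t| ^ (3:ℝ) ≤ |t| ^ m :=
          Real.rpow_le_rpow_of_exponent_ge h0 (by linarith) hm3
        calc |t|^3 = |t| ^ ((3:ℕ):ℝ) := by rw [Real.rpow_natCast]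
          _ = |t| ^ (3:ℝ) := by norm_num
          _ ≤ |t| ^ m := this
    calc |(|1+t|) ^ q - 1 - q*t - (q*(q-1)/2)*t^2| ≤ K3 * |t|^3 := hb'
      _ ≤ K3 * |t| ^ m := mul_le_mul_of_nonneg_left h3m hK3n
      _ ≤ (K3 + 3 ^ q + 8 + 4*q + q*q) * (|t| ^ m + |t| ^ q) := by
          have h1 : (0:ℝ) ≤ 3 ^ q + 8 + 4*q + q*q := by positivity
          nlinarith [htmn, htqn]
  · -- |t| ≥ 1/2
    have h2t : (1:ℝ) ≤ 2 * |t| := by linarith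
    have habs0 : (0:ℝ) < |t| := by linarith
    have hpow : ∀ s : ℝ, 0 ≤ s → s ≤ m → (2*|t|) ^ s ≤ 8 * |t| ^ m := by
      intro s hs0 hsm
      calc (2*|t|) ^ s ≤ (2*|t|) ^ m := Real.rpow_le_rpow_of_exponent_le h2t hsm
        _ = 2 ^ m * |t| ^ m := Real.mul_rpow (by norm_num) (abs_nonneg t)
        _ ≤ 8 * |t| ^ m := by
            have : (2:ℝ) ^ m ≤ 2 ^ (3:ℝ) :=
              Real.rpow_le_rpow_of_exponent_le (by norm_num) hm3
            have h8 : (2:ℝ) ^ (3:ℝ) = 8 := by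
              rw [show (3:ℝ) = ((3:ℕ):ℝ) by norm_num, Real.rpow_natCast]; norm_num
            nlinarith [htmn]
    have h1m : 1 ≤ 8 * |t| ^ m := by
      have := hpow 0 le_rfl hm0.le
      rwa [Real.rpow_zero] at this
    have htm : |t| ≤ 4 * |t| ^ m := by
      have := hpow 1 zero_le_one (by linarith)
      rw [Real.rpow_one] at this
      linarith
    have ht2 : t^2 ≤ 2 * |t| ^ m := by
      have := hpow 2 (by norm_num) (by linarith)
      have he : (2*|t|) ^ (2:ℝ) = 4 * t^2 := by
        rw [show (2:ℝ) = ((2:ℕ):ℝ) by norm_num, Real.rpow_natCast]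
        rw [mul_pow, sq_abs]; norm_num
      rw [he] at this
      linarith
    have htq : |1+t| ^ q ≤ 3 ^ q * |t| ^ q := by
      have h1 : |1+t| ≤ 3 * |t| := by
        calc |1+t| ≤ |(1:ℝ)| + |t| := abs_add_le 1 t
          _ = 1 + |t| := by norm_num
          _ ≤ 3 * |t| := by linarith
      calc |1+t| ^ q ≤ (3*|t|) ^ q := Real.rpow_le_rpow (abs_nonneg _) h1 hq0.le
        _ = 3 ^ q * |t| ^ q := Real.mul_rpow (by norm_num) (abs_nonneg t)
    have hLHS : |(|1+t|) ^ q - 1 - q*t - (q*(q-1)/2)*t^2| ≤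
        |1+t| ^ q + 1 + q*|t| + (q*(q-1)/2)*t^2 := by
      have h0 : (0:ℝ) ≤ |1+t| ^ q := Real.rpow_nonneg (abs_nonneg _) q
      have hqt : |q*t| = q * |t| := by rw [abs_mul, abs_of_pos hq0]
      have hc : |(q*(q-1)/2)*t^2| = (q*(q-1)/2)*t^2 := by
        rw [abs_mul, abs_of_pos (by nlinarith : (0:ℝ) < q*(q-1)/2), abs_of_nonneg (sq_nonneg t)]
      calc |(|1+t|) ^ q - 1 - q*t - (q*(q-1)/2)*t^2|
          ≤ |(|1+t|) ^ q - 1 - q*t| + |(q*(q-1)/2)*t^2| := abs_sub _ _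
        _ ≤ (|(|1+t|) ^ q - 1| + |q*t|) + (q*(q-1)/2)*t^2 := by
            rw [hc]; exact add_le_add_left (abs_sub _ _) _
        _ ≤ (|1+t| ^ q + 1 + q*|t|) + (q*(q-1)/2)*t^2 := by
            rw [hqt]
            have h5 : |(|1+t|) ^ q - 1| ≤ |(|1+t|) ^ q| + 1 := by
              simpa using abs_sub ((|1+t|) ^ q) (1:ℝ)
            rw [abs_of_nonneg h0] at h5
            linarith
        _ = |1+t| ^ q + 1 + q*|t| + (q*(q-1)/2)*t^2 := by ring
    calc |(|1+t|) ^ q - 1 - q*t - (q*(q-1)/2)*t^2|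
        ≤ |1+t| ^ q + 1 + q*|t| + (q*(q-1)/2)*t^2 := hLHS
      _ ≤ 3 ^ q * |t| ^ q + 8*|t| ^ m + q*(4*|t| ^ m) + (q*(q-1)/2)*(2*|t| ^ m) := by
          refine add_le_add (add_le_add (add_le_add htq h1m)
            (mul_le_mul_of_nonneg_left htm hq0.le)) ?_
          exact mul_le_mul_of_nonneg_left ht2 (by nlinarith)
      _ ≤ (K3 + 3 ^ q + 8 + 4*q + q*q) * (|t| ^ m + |t| ^ q) := by
          have h3q : (0:ℝ) ≤ 3 ^ q := by positivity
          nlinarith [htmn, htqn, hK3n]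

/-- intermediate power bound: `|t|^m ≤ t² + |t|^q` for `2 ≤ m ≤ q` -/
private lemma sl_pow_mid {mq q : ℝ} (h2m : 2 ≤ mq) (hmq : mq ≤ q) (t : ℝ) :
    |t| ^ mq ≤ t^2 + |t| ^ q := by
  rcases eq_or_lt_of_le (abs_nonneg t) with h0 | h0
  · rw [← h0, Real.zero_rpow (by linarith : mq ≠ 0), Real.zero_rpow (by linarith : q ≠ 0)]
    nlinarith [sq_nonneg t]
  · rcases le_or_gt (|t|) 1 with h1 | h1
    · have h2 : |t| ^ mq ≤ |t| ^ (2:ℝ) := Real.rpow_le_rpow_of_exponent_ge h0 h1 h2m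
      rw [show (2:ℝ) = ((2:ℕ):ℝ) by norm_num, Real.rpow_natCast, sq_abs] at h2
      have h3 : (0:ℝ) ≤ |t| ^ q := Real.rpow_nonneg (abs_nonneg t) q
      linarith
    · have h2 : |t| ^ mq ≤ |t| ^ q := Real.rpow_le_rpow_of_exponent_le h1.le hmq
      nlinarith [sq_nonneg t]

/-- final arithmetic gluing -/
private lemma sl_arith {C1 C2 c S Nq Mm D : ℝ} (hC1 : 0 ≤ C1) (hC2 : 0 ≤ C2)
    (hS0 : 0 ≤ S) (hN0 : 0 ≤ Nq) (hM0 : 0 ≤ Mm) (hMle : Mm ≤ S + 2*Nq)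
    (hD : |D| ≤ C1 * Mm) :
    C2*(c*S + D)^2 + C1*Mm ≤ (C2*(2*c^2 + 20*C1^2 + 1) + C1 + 1) * (Mm + Nq^2 + S^2) := by
  have hDsq : D^2 ≤ C1^2 * Mm^2 := by
    have h := mul_self_le_mul_self (abs_nonneg D) hD
    calc D^2 = |D| * |D| := by rw [← sq_abs]; ring
      _ ≤ (C1*Mm)*(C1*Mm) := h
      _ = C1^2*Mm^2 := by ring
  have hMsq : Mm^2 ≤ 3*S^2 + 6*Nq^2 := by
    have h := mul_self_le_mul_self hM0 hMle
    nlinarith [sq_nonneg (S - Nq), mul_nonneg hS0 hN0]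
  have h1 : (c*S + D)^2 ≤ 2*c^2*S^2 + 2*D^2 := by nlinarith [sq_nonneg (c*S - D)]
  have h2 : C2*(c*S+D)^2 ≤ C2*(2*c^2*S^2 + 2*C1^2*(3*S^2+6*Nq^2)) := by
    refine mul_le_mul_of_nonneg_left ?_ hC2
    have h3 := mul_le_mul_of_nonneg_left hMsq (by positivity : (0:ℝ) ≤ 2*C1^2)
    nlinarith [hDsq]
  nlinarith [h2, mul_nonneg hC2 (sq_nonneg S), mul_nonneg hC2 (sq_nonneg Nq),
    mul_nonneg hC2 hM0,
    mul_nonneg (mul_nonneg hC2 (sq_nonneg C1)) (sq_nonneg S),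
    mul_nonneg (mul_nonneg hC2 (sq_nonneg C1)) (sq_nonneg Nq),
    mul_nonneg (mul_nonneg hC2 (sq_nonneg C1)) hM0,
    mul_nonneg (mul_nonneg hC2 (sq_nonneg c)) (sq_nonneg S),
    mul_nonneg (mul_nonneg hC2 (sq_nonneg c)) (sq_nonneg Nq),
    mul_nonneg (mul_nonneg hC2 (sq_nonneg c)) hM0,
    mul_nonneg hC1 (sq_nonneg S), mul_nonneg hC1 (sq_nonneg Nq), mul_nonneg hC1 hM0,
    hM0, sq_nonneg S, sq_nonneg Nq]

end Aux

/-- **Elementary linearization of the Sobolev ratio.** For every real `q > 2` there is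
`C_q ≥ 0` such that for every probability space `(X, 𝔪)` and every
`f ∈ L²(𝔪) ∩ L^q(𝔪)` with `∫ f d𝔪 = 0`,
`| (∫|1+f|^q)^{2/q} − ∫(1+f)² − (q−2)∫f² | ≤ C_q (∫(|f|^{3∧q}+|f|^q) + (∫|f|^q)² + (∫f²)²)`. -/
theorem sobolev_linearization (q : ℝ) (hq : 2 < q) :
    ∃ C : ℝ, 0 ≤ C ∧
      ∀ (X : Type*) [MeasurableSpace X] (m : Measure X), IsProbabilityMeasure m →
        ∀ f : X → ℝ, MemLp f 2 m → MemLp f (ENNReal.ofReal q) m →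
          (∫ x, f x ∂m) = 0 →
          abs ((∫ x, |1 + f x| ^ q ∂m) ^ (2 / q) - (∫ x, (1 + f x) ^ 2 ∂m) -
              (q - 2) * ∫ x, f x ^ 2 ∂m) ≤
            C * ((∫ x, (|f x| ^ min 3 q + |f x| ^ q) ∂m) +
                 (∫ x, |f x| ^ q ∂m) ^ 2 + (∫ x, f x ^ 2 ∂m) ^ 2) := by
  obtain ⟨C1, hC1, hpt⟩ := sl_pointwise_taylor q hq
  obtain ⟨C2, hC2, hal⟩ := sl_rpow_alpha q hq
  have hq0 : 0 < q := by linarith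
  set c : ℝ := q*(q-1)/2 with hcdef
  have hc0 : 0 < c := by rw [hcdef]; nlinarith
  refine ⟨C2*(2*c^2 + 20*C1^2 + 1) + C1 + 1, ?_, ?_⟩
  · have h1 : (0:ℝ) ≤ 2*c^2 + 20*C1^2 + 1 := by positivity
    nlinarith [mul_nonneg hC2 h1]
  intro X _ m hmprob f hf2 hfq hf0
  haveI := hmprob
  have hm2 : 2 < min 3 q := lt_min (by norm_num) hq
  have hm3 : min 3 q ≤ 3 := min_le_left _ _
  have hmq : min 3 q ≤ q := min_le_right _ _
  -- measurability
  have hfae := hf2.aestronglyMeasurable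
  have habs : AEStronglyMeasurable (fun x => |f x|) m := hfae.norm.congr
    (Filter.Eventually.of_forall fun x => by simp [Real.norm_eq_abs])
  have habs1 : AEStronglyMeasurable (fun x => |1 + f x|) m :=
    (hfae.const_add 1).norm.congr
      (Filter.Eventually.of_forall fun x => by simp [Real.norm_eq_abs])
  -- integrability
  have hif : Integrable f m := hf2.integrable (by norm_num)
  have hif2 : Integrable (fun x => f x ^ 2) m := by
    have h := hf2.integrable_norm_rpow (by norm_num) (by norm_num)
    simp only [ENNReal.toReal_ofNat, Real.norm_eq_abs] at h
    exact h.congr (Filter.Eventually.of_forall fun x => by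
      simp only []
      rw [Real.rpow_two, sq_abs])
  have hifq : Integrable (fun x => |f x| ^ q) m := by
    have h := hfq.integrable_norm_rpow (by simp [ENNReal.ofReal_pos, hq0, ne_of_gt])
      ENNReal.ofReal_ne_top
    simpa [Real.norm_eq_abs, ENNReal.toReal_ofReal hq0.le] using h
  have hifm : Integrable (fun x => |f x| ^ min 3 q) m := by
    refine Integrable.mono' (hif2.add hifq)
      ((habs.aemeasurable.pow_const (min 3 q)).aestronglyMeasurable)
      (Filter.Eventually.of_forall fun x => ?_)
    rw [Real.norm_eq_abs, abs_of_nonneg (Real.rpow_nonneg (abs_nonneg _) _)]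
    exact sl_pow_mid hm2.le hmq (f x)
  have hig : Integrable (fun x => |1 + f x| ^ q) m := by
    refine Integrable.mono'
      (((((integrable_const (1:ℝ)).add (hif.abs.const_mul q)).add
        (hif2.const_mul c)).add ((hifm.add hifq).const_mul C1)))
      ((habs1.aemeasurable.pow_const q).aestronglyMeasurable)
      (Filter.Eventually.of_forall fun x => ?_)
    rw [Real.norm_eq_abs, abs_of_nonneg (Real.rpow_nonneg (abs_nonneg _) _)]
    have h1 := (abs_le.mp (hpt (f x))).2
    have h2 : q * f x ≤ q * |f x| := mul_le_mul_of_nonneg_left (le_abs_self _) hq0.le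
    simp only [Pi.add_apply]
    nlinarith [h1, h2]
  -- notation for integrals
  set S := ∫ x, f x ^ 2 ∂m with hSdef
  set Nq := ∫ x, |f x| ^ q ∂m with hNdef
  set Mm := ∫ x, (|f x| ^ min 3 q + |f x| ^ q) ∂m with hMdef
  set A := ∫ x, |1 + f x| ^ q ∂m with hAdef
  have hS0 : 0 ≤ S := integral_nonneg fun x => sq_nonneg _
  have hN0 : 0 ≤ Nq := integral_nonneg fun x => Real.rpow_nonneg (abs_nonneg _) _
  have hA0 : 0 ≤ A := integral_nonneg fun x => Real.rpow_nonneg (abs_nonneg _) _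
  have hMsplit : Mm = (∫ x, |f x| ^ min 3 q ∂m) + Nq := by
    rw [hMdef]; exact integral_add hifm hifq
  have hM0 : 0 ≤ Mm := integral_nonneg fun x =>
    add_nonneg (Real.rpow_nonneg (abs_nonneg _) _) (Real.rpow_nonneg (abs_nonneg _) _)
  have hMle : Mm ≤ S + 2*Nq := by
    have h1 : (∫ x, |f x| ^ min 3 q ∂m) ≤ ∫ x, (f x ^ 2 + |f x| ^ q) ∂m :=
      integral_mono hifm (hif2.add hifq) fun x => sl_pow_mid hm2.le hmq (f x)
    rw [integral_add hif2 hifq] at h1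
    rw [hMsplit]; linarith
  -- the second moment of 1+f
  have hB : (∫ x, (1 + f x) ^ 2 ∂m) = 1 + S := by
    have h1 : (∫ x, (1 + f x) ^ 2 ∂m) = ∫ x, (1 + (2 * f x + f x ^ 2)) ∂m := by
      apply integral_congr_ae
      exact Filter.Eventually.of_forall fun x => by ring
    have h2 : ∫ x, (1 + (2 * f x + f x ^ 2)) ∂m
        = (∫ _x, (1:ℝ) ∂m) + ∫ x, (2 * f x + f x ^ 2) ∂m :=
      integral_add (integrable_const 1) ((hif.const_mul 2).add hif2)
    have h3 : ∫ x, (2 * f x + f x ^ 2) ∂m = (∫ x, 2 * f x ∂m) + ∫ x, f x ^ 2 ∂m :=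
      integral_add (hif.const_mul 2) hif2
    have h4 : ∫ x, 2 * f x ∂m = 2 * ∫ x, f x ∂m := integral_const_mul 2 f
    rw [h1, h2, h3, h4, hf0]
    simp [hSdef]
  -- the remainder
  have hiR : Integrable
      (fun x => |1 + f x| ^ q - 1 - q * f x - c * f x ^ 2) m :=
    ((hig.sub (integrable_const 1)).sub (hif.const_mul q)).sub (hif2.const_mul c)
  set E2 := ∫ x, (|1 + f x| ^ q - 1 - q * f x - c * f x ^ 2) ∂m with hE2def
  have hE2val : E2 = A - 1 - c * S := by
    have e1 : E2 = (∫ x, (|1 + f x| ^ q - 1 - q * f x) ∂m) - ∫ x, c * f x ^ 2 ∂m :=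
      integral_sub ((hig.sub (integrable_const 1)).sub (hif.const_mul q)) (hif2.const_mul c)
    have e2 : ∫ x, (|1 + f x| ^ q - 1 - q * f x) ∂m
        = (∫ x, (|1 + f x| ^ q - 1) ∂m) - ∫ x, q * f x ∂m :=
      integral_sub (hig.sub (integrable_const 1)) (hif.const_mul q)
    have e3 : ∫ x, (|1 + f x| ^ q - 1) ∂m = (∫ x, |1 + f x| ^ q ∂m) - ∫ _x, (1:ℝ) ∂m :=
      integral_sub hig (integrable_const 1)
    have e4 : ∫ x, q * f x ∂m = q * ∫ x, f x ∂m := integral_const_mul q f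
    have e5 : ∫ x, c * f x ^ 2 ∂m = c * ∫ x, f x ^ 2 ∂m := integral_const_mul c _
    rw [e1, e2, e3, e4, e5, hf0]
    simp [hAdef, hSdef]
  have hE2le : |E2| ≤ C1 * Mm := by
    calc |E2| ≤ ∫ x, |(|1 + f x| ^ q - 1 - q * f x - c * f x ^ 2)| ∂m := by
          rw [hE2def]
          exact
            norm_integral_le_integral_norm (μ := m) (fun x => |1 + f x| ^ q - 1 - q * f x - c * f x ^ 2)
      _ ≤ ∫ x, C1 * (|f x| ^ min 3 q + |f x| ^ q) ∂m := by
          refine integral_mono hiR.abs ((hifm.add hifq).const_mul C1) fun x => ?_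
          exact hpt (f x)
      _ = C1 * Mm := by
          rw [integral_const_mul C1 (fun x => |f x| ^ min 3 q + |f x| ^ q), hMdef]
  -- main estimate
  rw [hB]
  have hAval : A = 1 + c * S + E2 := by rw [hE2val]; ring
  have hD := hal A hA0
  have halg : A ^ (2/q) - (1 + S) - (q-2)*S =
      (A ^ (2/q) - 1 - (2/q)*(A-1)) + (2/q)*E2 := by
    have hkey : (2/q) * c = q - 1 := by
      rw [hcdef]; field_simp
    have hA1 : A - 1 = c * S + E2 := by rw [hAval]; ring
    rw [hA1]
    have : (2/q) * (c * S + E2) = (q-1)*S + (2/q)*E2 := by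
      rw [mul_add, ← mul_assoc, hkey]
    rw [this]; ring
  rw [halg]
  have hstep1 : |(A ^ (2/q) - 1 - (2/q)*(A-1)) + (2/q)*E2| ≤ C2*(A-1)^2 + C1*Mm := by
    calc |(A ^ (2/q) - 1 - (2/q)*(A-1)) + (2/q)*E2|
        ≤ |A ^ (2/q) - 1 - (2/q)*(A-1)| + |(2/q)*E2| := abs_add_le _ _
      _ ≤ C2*(A-1)^2 + C1*Mm := by
          refine add_le_add hD ?_
          have h1 : |(2/q)*E2| = (2/q)*|E2| := by
            rw [abs_mul, abs_of_pos (by positivity : (0:ℝ) < 2/q)]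
          have h2 : (2:ℝ)/q ≤ 1 := by rw [div_le_one hq0]; linarith
          have h3 : (2/q)*|E2| ≤ |E2| := by nlinarith [abs_nonneg E2]
          rw [h1]; exact h3.trans hE2le
  refine hstep1.trans ?_
  have hA1 : A - 1 = c * S + E2 := by rw [hE2val]; ring
  calc C2*(A-1)^2 + C1*Mm = C2*(c*S + E2)^2 + C1*Mm := by rw [hA1]
    _ ≤ (C2*(2*c^2 + 20*C1^2 + 1) + C1 + 1) * (Mm + Nq^2 + S^2) :=
        sl_arith hC1 hC2 hS0 hN0 hM0 hMle hE2le
end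

section
/- Let (X, d) be a complete separable metric space and let μ, ν be finite Borel measures on X. Let 1 ≤ p < q < ∞ and C > 0, and assume that (∫ |φ|^q dν)^{1/q} ≤ C · (∫ |φ|^p dμ)^{1/p} for every bounded Lipschitz function φ : X → ℝ. Then ν is purely atomic: there exists a countable set D ⊆ X with ν(X ∖ D) = 0; moreover, for every x ∈ X one has μ({x}) ≥ C^{−p} · (ν({x}))^{p/q}. -/
open MeasureTheory Metric Set Filter Topology

section Aux

variable {X : Type*} [MetricSpace X] [MeasurableSpace X] [BorelSpace X]

/-- Testing against Lipschitz approximations of the indicator of a closed set. -/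
lemma lions_closed_bound
    (μ ν : Measure X) [IsFiniteMeasure μ] [IsFiniteMeasure ν]
    (p q C : ℝ) (hp0 : 0 < p) (hq0 : 0 < q) (hC : 0 < C)
    (hSob : ∀ φ : X → ℝ, (∃ K : NNReal, LipschitzWith K φ) → (∃ M : ℝ, ∀ x, |φ x| ≤ M) →
      (∫ x, |φ x| ^ q ∂ν) ^ (1 / q) ≤ C * (∫ x, |φ x| ^ p ∂μ) ^ (1 / p))
    {F : Set X} (hF : IsClosed F) :
    (ν F).toReal ^ (1 / q) ≤ C * (μ F).toReal ^ (1 / p) := by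
  rcases F.eq_empty_or_nonempty with rfl | hne
  · rw [measure_empty]
    simp only [ENNReal.toReal_zero]
    rw [Real.zero_rpow (by positivity : (1:ℝ)/q ≠ 0)]
    positivity
  have key : ∀ δ : ℝ, 0 < δ →
      (ν F).toReal ^ (1 / q) ≤ C * (μ (cthickening δ F)).toReal ^ (1 / p) := by
    intro δ hδ
    set φ : X → ℝ := fun x => max (1 - infDist x F / δ) 0 with hφdef
    have hφ0 : ∀ x, 0 ≤ φ x := fun x => le_max_right _ _
    have hφ1 : ∀ x, φ x ≤ 1 := by
      intro x
      apply max_le _ zero_le_one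
      have : 0 ≤ infDist x F / δ := div_nonneg infDist_nonneg hδ.le
      linarith
    have hφabs : ∀ x, |φ x| = φ x := fun x => abs_of_nonneg (hφ0 x)
    have hφabs1 : ∀ x, |φ x| ≤ 1 := fun x => by rw [hφabs x]; exact hφ1 x
    have hφcont : Continuous φ :=
      (continuous_const.sub ((lipschitz_infDist_pt F).continuous.div_const δ)).max
        continuous_const
    have hφlip : LipschitzWith (Real.toNNReal δ⁻¹) φ := by
      apply LipschitzWith.of_dist_le_mul
      intro x y
      rw [Real.coe_toNNReal _ (by positivity), Real.dist_eq]
      have h1 : |φ x - φ y| ≤ |(1 - infDist x F / δ) - (1 - infDist y F / δ)| :=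
        abs_max_sub_max_le_abs _ _ _
      have h2 : (1 - infDist x F / δ) - (1 - infDist y F / δ)
          = (infDist y F - infDist x F) / δ := by ring
      have h3 : |infDist y F - infDist x F| ≤ dist x y := by
        have := (lipschitz_infDist_pt F).dist_le_mul y x
        rw [NNReal.coe_one, one_mul, Real.dist_eq] at this
        rw [dist_comm x y]
        exact this
      calc |φ x - φ y| ≤ |(infDist y F - infDist x F) / δ| := by rw [← h2]; exact h1
        _ = |infDist y F - infDist x F| / δ := by
            rw [abs_div, abs_of_pos hδ]
        _ ≤ dist x y / δ := by gcongr
        _ = δ⁻¹ * dist x y := by ring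
    have meas_q : AEStronglyMeasurable (fun x => |φ x| ^ q) ν :=
      ((Real.continuous_rpow_const hq0.le).comp hφcont.abs).aestronglyMeasurable
    have meas_p : AEStronglyMeasurable (fun x => |φ x| ^ p) μ :=
      ((Real.continuous_rpow_const hp0.le).comp hφcont.abs).aestronglyMeasurable
    have bound_q : ∀ x, |φ x| ^ q ≤ 1 := fun x =>
      Real.rpow_le_one (abs_nonneg _) (hφabs1 x) hq0.le
    have bound_p : ∀ x, |φ x| ^ p ≤ 1 := fun x =>
      Real.rpow_le_one (abs_nonneg _) (hφabs1 x) hp0.le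
    have int_q : Integrable (fun x => |φ x| ^ q) ν := by
      apply (integrable_const (1:ℝ)).mono' meas_q
      filter_upwards with x
      rw [Real.norm_eq_abs, abs_of_nonneg (Real.rpow_nonneg (abs_nonneg _) _)]
      exact bound_q x
    have int_p : Integrable (fun x => |φ x| ^ p) μ := by
      apply (integrable_const (1:ℝ)).mono' meas_p
      filter_upwards with x
      rw [Real.norm_eq_abs, abs_of_nonneg (Real.rpow_nonneg (abs_nonneg _) _)]
      exact bound_p x
    have hνF : (ν F).toReal ≤ ∫ x, |φ x| ^ q ∂ν := by
      have heq : (ν F).toReal = ∫ x, F.indicator (fun _ => (1:ℝ)) x ∂ν := by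
        rw [integral_indicator_const (1:ℝ) hF.measurableSet]; simp; rfl
      rw [heq]
      apply integral_mono ((integrable_const (1:ℝ)).indicator hF.measurableSet) int_q
      intro x
      by_cases hx : x ∈ F
      · have hd : infDist x F = 0 := infDist_zero_of_mem hx
        have hφx : φ x = 1 := by simp [hφdef, hd]
        simp [Set.indicator_of_mem hx, hφx]
      · rw [Set.indicator_of_notMem hx]
        positivity
    have hμside : ∫ x, |φ x| ^ p ∂μ ≤ (μ (cthickening δ F)).toReal := by
      have heq : (μ (cthickening δ F)).toReal
          = ∫ x, (cthickening δ F).indicator (fun _ => (1:ℝ)) x ∂μ := by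
        rw [integral_indicator_const (1:ℝ) (isClosed_cthickening).measurableSet]; simp; rfl
      rw [heq]
      apply integral_mono int_p
        ((integrable_const (1:ℝ)).indicator (isClosed_cthickening).measurableSet)
      intro x
      by_cases hx : x ∈ cthickening δ F
      · rw [Set.indicator_of_mem hx]
        exact bound_p x
      · rw [Set.indicator_of_notMem hx]
        show |φ x| ^ p ≤ (0:ℝ)
        have hd : δ ≤ infDist x F := by
          by_contra hlt
          push_neg at hlt
          exact hx (thickening_subset_cthickening δ F
            ((mem_thickening_iff_infDist_lt hne).2 hlt))
        have hφx : φ x = 0 := by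
          apply max_eq_right
          have : (1:ℝ) ≤ infDist x F / δ := (one_le_div hδ).2 hd
          linarith
        rw [hφx, abs_zero, Real.zero_rpow hp0.ne']
    have hSφ := hSob φ ⟨_, hφlip⟩ ⟨1, hφabs1⟩
    calc (ν F).toReal ^ (1/q) ≤ (∫ x, |φ x| ^ q ∂ν) ^ (1/q) :=
          Real.rpow_le_rpow ENNReal.toReal_nonneg hνF (by positivity)
      _ ≤ C * (∫ x, |φ x| ^ p ∂μ) ^ (1/p) := hSφ
      _ ≤ C * (μ (cthickening δ F)).toReal ^ (1/p) := by
          apply mul_le_mul_of_nonneg_left _ hC.le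
          exact Real.rpow_le_rpow
            (integral_nonneg fun x => Real.rpow_nonneg (abs_nonneg _) _) hμside (by positivity)
  have htend : Tendsto (fun δ => C * (μ (cthickening δ F)).toReal ^ (1/p)) (𝓝[>] (0:ℝ))
      (𝓝 (C * (μ F).toReal ^ (1/p))) := by
    have h1 : Tendsto (fun δ => μ (cthickening δ F)) (𝓝[>] (0:ℝ)) (𝓝 (μ F)) :=
      (tendsto_measure_cthickening_of_isClosed
        ⟨1, one_pos, measure_ne_top μ _⟩ hF).mono_left nhdsWithin_le_nhds
    have h2 : Tendsto (fun δ => (μ (cthickening δ F)).toReal) (𝓝[>] (0:ℝ))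
        (𝓝 (μ F).toReal) := (ENNReal.tendsto_toReal (measure_ne_top μ F)).comp h1
    have h3 := ((Real.continuousAt_rpow_const _ (1/p) (Or.inr (by positivity))).tendsto.comp h2)
    exact h3.const_mul C
  exact ge_of_tendsto htend (eventually_nhdsWithin_of_forall fun δ hδ => key δ hδ)

/-- The reverse Hölder bound for measurable sets. -/
lemma lions_meas_bound
    (μ ν : Measure X) [IsFiniteMeasure μ] [IsFiniteMeasure ν]
    (p q C : ℝ) (hp0 : 0 < p) (hq0 : 0 < q) (hC : 0 < C)
    (hSob : ∀ φ : X → ℝ, (∃ K : NNReal, LipschitzWith K φ) → (∃ M : ℝ, ∀ x, |φ x| ≤ M) →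
      (∫ x, |φ x| ^ q ∂ν) ^ (1 / q) ≤ C * (∫ x, |φ x| ^ p ∂μ) ^ (1 / p))
    {s : Set X} (hs : MeasurableSet s) :
    ν s ≤ ENNReal.ofReal (C ^ q) * μ s ^ (q / p) := by
  have closed_bd : ∀ {F : Set X}, IsClosed F →
      ν F ≤ ENNReal.ofReal (C ^ q) * μ F ^ (q / p) := by
    intro F hF
    have h1 := lions_closed_bound μ ν p q C hp0 hq0 hC hSob hF
    have h2 := Real.rpow_le_rpow (Real.rpow_nonneg ENNReal.toReal_nonneg _) h1 hq0.le
    have hexp : 1 / p * q = q / p := by ring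
    rw [← Real.rpow_mul ENNReal.toReal_nonneg, one_div_mul_cancel hq0.ne', Real.rpow_one,
      Real.mul_rpow hC.le (Real.rpow_nonneg ENNReal.toReal_nonneg _),
      ← Real.rpow_mul ENNReal.toReal_nonneg, hexp] at h2
    calc ν F = ENNReal.ofReal ((ν F).toReal) := (ENNReal.ofReal_toReal (measure_ne_top ν F)).symm
      _ ≤ ENNReal.ofReal (C ^ q * (μ F).toReal ^ (q/p)) := ENNReal.ofReal_le_ofReal h2
      _ = ENNReal.ofReal (C ^ q) * ENNReal.ofReal ((μ F).toReal ^ (q/p)) :=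
          ENNReal.ofReal_mul (by positivity)
      _ = ENNReal.ofReal (C ^ q) * μ F ^ (q/p) := by
          rw [← ENNReal.ofReal_rpow_of_nonneg ENNReal.toReal_nonneg (by positivity),
            ENNReal.ofReal_toReal (measure_ne_top μ F)]
  apply ENNReal.le_of_forall_pos_le_add
  intro ε hε _
  have hε' : (ε : ENNReal) ≠ 0 := by exact_mod_cast hε.ne'
  obtain ⟨F, hFs, hFc, hFlt⟩ := hs.exists_isClosed_lt_add (measure_ne_top ν s) hε'
  calc ν s ≤ ν F + ε := hFlt.le
    _ ≤ ENNReal.ofReal (C ^ q) * μ F ^ (q/p) + ε := add_le_add_left (closed_bd hFc) _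
    _ ≤ ENNReal.ofReal (C ^ q) * μ s ^ (q/p) + ε := by
        gcongr

end Aux

/-- **Concentration–compactness lemma of Lions.** Let `(X,d)` be a complete separable
metric space, `μ, ν` finite Borel measures, `1 ≤ p < q < ∞`, `C > 0`, and assume
`(∫|φ|^q dν)^{1/q} ≤ C (∫|φ|^p dμ)^{1/p}` for every bounded Lipschitz `φ : X → ℝ`.
Then `ν` is purely atomic (concentrated on a countable set) and
`μ({x}) ≥ C^{-p} ν({x})^{p/q}` for every `x ∈ X`. -/
theorem lions_concentration_compactness
    {X : Type*} [MetricSpace X] [CompleteSpace X] [TopologicalSpace.SeparableSpace X]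
    [MeasurableSpace X] [BorelSpace X]
    (μ ν : Measure X) [IsFiniteMeasure μ] [IsFiniteMeasure ν]
    (p q C : ℝ) (hp : 1 ≤ p) (hpq : p < q) (hC : 0 < C)
    (hSob : ∀ φ : X → ℝ, (∃ K : NNReal, LipschitzWith K φ) → (∃ M : ℝ, ∀ x, |φ x| ≤ M) →
      (∫ x, |φ x| ^ q ∂ν) ^ (1 / q) ≤ C * (∫ x, |φ x| ^ p ∂μ) ^ (1 / p)) :
    (∃ D : Set X, D.Countable ∧ ν Dᶜ = 0) ∧
      ∀ x : X, ENNReal.ofReal (C ^ (-p)) * ν {x} ^ (p / q) ≤ μ {x} := by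
  have hp0 : (0:ℝ) < p := lt_of_lt_of_le one_pos hp
  have hq0 : (0:ℝ) < q := lt_trans hp0 hpq
  have he1 : (1:ℝ) < q / p := (one_lt_div hp0).2 hpq
  constructor
  · -- atomicity
    set D : Set X := {x | 0 < μ {x}} with hD
    have hDcount : D.Countable := by
      have h := Measure.countable_meas_level_set_pos (μ := μ) (g := id) measurable_id
      simpa [Set.setOf_eq_eq_singleton] using h
    have hDmeas : MeasurableSet D := hDcount.measurableSet
    refine ⟨D, hDcount, ?_⟩
    set m : Measure X := μ.restrict Dᶜ with hm
    haveI : IsFiniteMeasure m := ⟨by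
      rw [hm, Measure.restrict_apply_univ]; exact measure_lt_top μ _⟩
    haveI hm_noatom : NoAtoms m := by
      constructor
      intro x
      rw [hm, Measure.restrict_apply (measurableSet_singleton x)]
      by_cases hx : x ∈ D
      · have : ({x} : Set X) ∩ Dᶜ = ∅ := by
          apply Set.eq_empty_of_forall_notMem
          rintro y ⟨rfl | h, hy2⟩
          exact hy2 hx
        rw [this, measure_empty]
      · have h0 : μ {x} = 0 := by
          by_contra h
          exact hx (pos_iff_ne_zero.2 h)
        exact measure_mono_null Set.inter_subset_left h0
    have main : ∀ ε : ℝ, 0 < ε →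
        ν Dᶜ ≤ ENNReal.ofReal (C ^ q) * ENNReal.ofReal (ε ^ (q/p - 1)) * μ Set.univ := by
      intro ε hε
      rcases isEmpty_or_nonempty X with hX | hX
      · rw [Set.eq_empty_of_isEmpty (Dᶜ : Set X), measure_empty]
        exact zero_le
      set u : ℕ → X := TopologicalSpace.denseSeq X with hu_def
      have hu : DenseRange u := TopologicalSpace.denseRange_denseSeq X
      set B : ℕ × ℕ → Set X := fun kj =>
        if m (ball (u kj.1) (1 / (kj.2 + 1))) < ENNReal.ofReal ε
        then ball (u kj.1) (1 / (kj.2 + 1)) else ∅ with hB_def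
      have hBmeas : ∀ kj, MeasurableSet (B kj) := by
        intro kj
        rw [hB_def]
        dsimp only
        split
        · exact measurableSet_ball
        · exact MeasurableSet.empty
      have hBsmall : ∀ kj, m (B kj) ≤ ENNReal.ofReal ε := by
        intro kj
        rw [hB_def]
        dsimp only
        split
        · exact le_of_lt ‹_›
        · rw [measure_empty]; exact zero_le
      have hBcover : (⋃ kj, B kj) = Set.univ := by
        ext x
        simp only [Set.mem_univ, iff_true, Set.mem_iUnion]
        -- first find a good radius
        have hx0 : m {x} = 0 := @NullSingletonClass.measure_singleton _ _ m hm_noatom x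
        have htend : Tendsto (fun r => m (closedBall x r)) (𝓝[>] (0:ℝ)) (𝓝 0) := by
          have h1 : Tendsto (fun r => m (cthickening r ({x} : Set X))) (𝓝 (0:ℝ))
              (𝓝 (m {x})) :=
            tendsto_measure_cthickening_of_isClosed
              ⟨1, one_pos, measure_ne_top m _⟩ isClosed_singleton
          rw [hx0] at h1
          apply Tendsto.congr' _ (h1.mono_left nhdsWithin_le_nhds)
          filter_upwards [self_mem_nhdsWithin] with r (hr : (0:ℝ) < r)
          rw [cthickening_singleton x hr.le]
        have hseq : Tendsto (fun j : ℕ => (2:ℝ) / (j + 1)) atTop (𝓝[>] (0:ℝ)) := by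
          apply tendsto_nhdsWithin_of_tendsto_nhds_of_eventually_within
          · apply Tendsto.div_atTop tendsto_const_nhds
            exact tendsto_atTop_add_const_right _ 1 tendsto_natCast_atTop_atTop
          · filter_upwards with j
            have : (0:ℝ) < (j:ℝ) + 1 := by positivity
            exact div_pos two_pos this
        have hev : ∀ᶠ r in 𝓝[>] (0:ℝ), m (closedBall x r) < ENNReal.ofReal ε :=
          htend.eventually_lt_const (by simpa using ENNReal.ofReal_pos.2 hε)
        obtain ⟨j, hj⟩ := (hseq.eventually hev).exists
        obtain ⟨k, hk⟩ := Metric.denseRange_iff.1 hu x (1 / (j + 1)) (by positivity)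
        have hsubset : ball (u k) (1 / (j + 1)) ⊆ closedBall x (2 / (j + 1)) := by
          intro y hy
          rw [mem_closedBall]
          have h1 : dist y (u k) < 1 / (j + 1) := mem_ball.1 hy
          have h2 : dist (u k) x < 1 / (j + 1) := by rw [dist_comm]; exact hk
          calc dist y x ≤ dist y (u k) + dist (u k) x := dist_triangle _ _ _
            _ ≤ 2 / (j + 1) := by rw [show (2:ℝ)/(j+1) = 1/(j+1) + 1/(j+1) by ring]; linarith
        have hsmall : m (ball (u k) (1 / (j + 1))) < ENNReal.ofReal ε :=
          lt_of_le_of_lt (measure_mono hsubset) hj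
        refine ⟨(k, j), ?_⟩
        rw [hB_def]
        dsimp only
        rw [if_pos hsmall]
        exact mem_ball.2 hk
      -- reindex over ℕ and disjointify
      set e : ℕ ≃ ℕ × ℕ := (Denumerable.eqv (ℕ × ℕ)).symm with he_def
      set B' : ℕ → Set X := fun n => B (e n) with hB'_def
      have hB'meas : ∀ n, MeasurableSet (B' n) := fun n => hBmeas _
      have hB'cover : (⋃ n, B' n) = Set.univ := by
        rw [hB'_def]
        rw [e.surjective.iUnion_comp B]
        exact hBcover
      set E : ℕ → Set X := disjointed B' with hE_def
      have hEmeas : ∀ n, MeasurableSet (E n) := MeasurableSet.disjointed hB'meas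
      have hEcover : (⋃ n, E n) = Set.univ := by
        rw [hE_def, iUnion_disjointed]; exact hB'cover
      have hEsmall : ∀ n, m (E n) ≤ ENNReal.ofReal ε := fun n =>
        le_trans (measure_mono (disjointed_subset B' n)) (hBsmall _)
      have hstep : ∀ n, ν (E n ∩ Dᶜ)
          ≤ ENNReal.ofReal (C ^ q) * ENNReal.ofReal (ε ^ (q/p - 1)) * m (E n) := by
        intro n
        have h1 : ν (E n ∩ Dᶜ) ≤ ENNReal.ofReal (C ^ q) * (m (E n)) ^ (q/p) := by
          have h := lions_meas_bound μ ν p q C hp0 hq0 hC hSob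
            ((hEmeas n).inter hDmeas.compl)
          rwa [show μ (E n ∩ Dᶜ) = m (E n) by
            rw [hm, Measure.restrict_apply (hEmeas n)]] at h
        refine h1.trans ?_
        rw [mul_assoc]
        apply mul_le_mul_right
        rcases eq_or_ne (m (E n)) 0 with h0 | h0
        · rw [h0, ENNReal.zero_rpow_of_pos (by positivity), mul_zero]
        · have hsplit := ENNReal.rpow_add (x := m (E n)) (q/p - 1) 1 h0 (measure_ne_top m _)
          rw [show q/p - 1 + 1 = q/p by ring, ENNReal.rpow_one] at hsplit
          rw [hsplit]
          apply mul_le_mul_left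
          calc (m (E n)) ^ (q/p - 1) ≤ (ENNReal.ofReal ε) ^ (q/p - 1) :=
                ENNReal.rpow_le_rpow (hEsmall n) (by linarith)
            _ = ENNReal.ofReal (ε ^ (q/p - 1)) :=
                ENNReal.ofReal_rpow_of_nonneg hε.le (by linarith)
      calc ν Dᶜ = ν (Set.univ ∩ Dᶜ) := by rw [Set.univ_inter]
        _ = ν ((⋃ n, E n) ∩ Dᶜ) := by rw [hEcover]
        _ = ν (⋃ n, E n ∩ Dᶜ) := by rw [Set.iUnion_inter]
        _ ≤ ∑' n, ν (E n ∩ Dᶜ) := measure_iUnion_le _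
        _ ≤ ∑' n, ENNReal.ofReal (C ^ q) * ENNReal.ofReal (ε ^ (q/p - 1)) * m (E n) :=
            ENNReal.tsum_le_tsum hstep
        _ = ENNReal.ofReal (C ^ q) * ENNReal.ofReal (ε ^ (q/p - 1)) * ∑' n, m (E n) :=
            ENNReal.tsum_mul_left
        _ = ENNReal.ofReal (C ^ q) * ENNReal.ofReal (ε ^ (q/p - 1)) * m (⋃ n, E n) := by
            rw [measure_iUnion (disjoint_disjointed B') hEmeas]
        _ = ENNReal.ofReal (C ^ q) * ENNReal.ofReal (ε ^ (q/p - 1)) * m Set.univ := by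
            rw [hEcover]
        _ ≤ ENNReal.ofReal (C ^ q) * ENNReal.ofReal (ε ^ (q/p - 1)) * μ Set.univ := by
            apply mul_le_mul_right
            rw [hm, Measure.restrict_apply_univ]
            exact measure_mono (Set.subset_univ _)
    -- let ε → 0 along 1/(n+1)
    have hlim : Tendsto (fun n : ℕ =>
        ENNReal.ofReal (C ^ q) * ENNReal.ofReal ((1/((n:ℝ)+1)) ^ (q/p - 1)) * μ Set.univ)
        atTop (𝓝 0) := by
      have h1 : Tendsto (fun n : ℕ => (1/((n:ℝ)+1))) atTop (𝓝 0) := by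
        apply Tendsto.div_atTop tendsto_const_nhds
        exact tendsto_atTop_add_const_right _ 1 tendsto_natCast_atTop_atTop
      have h2 : Tendsto (fun n : ℕ => (1/((n:ℝ)+1)) ^ (q/p - 1)) atTop (𝓝 0) := by
        have hc := (Real.continuousAt_rpow_const 0 (q/p - 1)
          (Or.inr (by linarith))).tendsto.comp h1
        rw [Real.zero_rpow (by linarith : q/p - 1 ≠ 0)] at hc
        exact hc
      have h3 : Tendsto (fun n : ℕ =>
          ENNReal.ofReal (C ^ q) * ENNReal.ofReal ((1/((n:ℝ)+1)) ^ (q/p - 1)))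
          atTop (𝓝 0) := by
        have h4 := ENNReal.tendsto_ofReal h2
        rw [ENNReal.ofReal_zero] at h4
        have h5 := ENNReal.Tendsto.const_mul h4
          (Or.inr (ENNReal.ofReal_ne_top : ENNReal.ofReal (C ^ q) ≠ ⊤))
        simpa using h5
      have h6 := ENNReal.Tendsto.mul_const h3 (Or.inr (measure_ne_top μ Set.univ))
      simpa using h6
    have hle : ν Dᶜ ≤ 0 := by
      apply ge_of_tendsto hlim
      filter_upwards with n
      exact main (1/((n:ℝ)+1)) (by positivity)
    exact le_antisymm hle zero_le
  · -- pointwise bound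
    intro x
    have h1 := lions_closed_bound μ ν p q C hp0 hq0 hC hSob
      (isClosed_singleton (x := x))
    set a := (ν {x}).toReal with ha_def
    set b := (μ {x}).toReal with hb_def
    have ha : 0 ≤ a := ENNReal.toReal_nonneg
    have hb : 0 ≤ b := ENNReal.toReal_nonneg
    have h2 : a ^ (p/q) ≤ C ^ p * b := by
      have h := Real.rpow_le_rpow (Real.rpow_nonneg ha _) h1 hp0.le
      have hexp : 1 / q * p = p / q := by ring
      rwa [← Real.rpow_mul ha, hexp,
        Real.mul_rpow hC.le (Real.rpow_nonneg hb _),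
        ← Real.rpow_mul hb, one_div_mul_cancel hp0.ne', Real.rpow_one] at h
    have h3 : C ^ (-p) * a ^ (p/q) ≤ b := by
      rw [Real.rpow_neg hC.le]
      rw [inv_mul_le_iff₀ (Real.rpow_pos_of_pos hC p)]
      exact h2
    calc ENNReal.ofReal (C ^ (-p)) * ν {x} ^ (p/q)
        = ENNReal.ofReal (C ^ (-p)) * ENNReal.ofReal (a ^ (p/q)) := by
          rw [← ENNReal.ofReal_rpow_of_nonneg ha (by positivity),
            ha_def, ENNReal.ofReal_toReal (measure_ne_top ν _)]
      _ = ENNReal.ofReal (C ^ (-p) * a ^ (p/q)) :=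
          (ENNReal.ofReal_mul (by positivity)).symm
      _ ≤ ENNReal.ofReal b := ENNReal.ofReal_le_ofReal h3
      _ = μ {x} := ENNReal.ofReal_toReal (measure_ne_top μ _)
end

section
/- Let (Z, d) be a compact metric space and let (𝔪_n)_{n∈ℕ} and 𝔪_∞ be finite Borel measures on Z with 𝔪_n ⇀ 𝔪_∞ weakly. Let p, q ∈ (1,∞) with 1/p + 1/q = 1. Suppose a sequence of Borel functions u_n ∈ L^q(𝔪_n) converges L^q-strongly to u_∞ ∈ L^q(𝔪_∞), and a sequence v_n ∈ L^p(𝔪_n) converges L^p-weakly to v_∞ ∈ L^p(𝔪_∞). Then lim_{n→∞} ∫ u_n v_n d𝔪_n = ∫ u_∞ v_∞ d𝔪_∞. -/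
open MeasureTheory Filter Set
open scoped ENNReal NNReal

noncomputable def Sq (q r : ℝ) : ℝ := Real.sign r * |r| ^ (q - 1)

noncomputable def Dq (q a b : ℝ) : ℝ := |a| ^ q - |b| ^ q - q * Sq q b * (a - b)

lemma continuous_abs_rpow {e : ℝ} (he : 0 ≤ e) : Continuous fun r : ℝ => |r| ^ e :=
  continuous_iff_continuousAt.2 fun x =>
    (Real.continuousAt_rpow_const _ _ (Or.inr he)).comp continuous_abs.continuousAt

lemma abs_sign_le (r : ℝ) : |Real.sign r| ≤ 1 := by
  rcases Real.sign_apply_eq r with h | h | h <;> simp [h]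

lemma Sq_zero (q : ℝ) : Sq q 0 = 0 := by simp [Sq]

lemma continuous_Sq {q : ℝ} (hq : 1 < q) : Continuous (Sq q) := by
  have he : (0:ℝ) < q - 1 := by linarith
  refine continuous_iff_continuousAt.2 fun x => ?_
  rcases lt_trichotomy x 0 with hx | hx | hx
  · have hc : ContinuousAt (fun r : ℝ => -(|r| ^ (q-1))) x :=
      ((continuous_abs_rpow he.le).neg).continuousAt
    refine hc.congr ?_
    filter_upwards [Iio_mem_nhds hx] with r hr
    simp [Sq, Real.sign_of_neg hr]
  · subst hx
    have h0 : Sq q 0 = 0 := Sq_zero q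
    rw [ContinuousAt, h0]
    have hb : ∀ r : ℝ, ‖Sq q r‖ ≤ |r| ^ (q-1) := by
      intro r
      have : ‖Sq q r‖ = |Real.sign r| * (|r| ^ (q-1)) := by
        rw [Real.norm_eq_abs, Sq, abs_mul, abs_of_nonneg (Real.rpow_nonneg (abs_nonneg r) _)]
      rw [this]
      calc |Real.sign r| * (|r| ^ (q-1)) ≤ 1 * (|r| ^ (q-1)) :=
            mul_le_mul_of_nonneg_right (abs_sign_le r) (Real.rpow_nonneg (abs_nonneg r) _)
        _ = |r| ^ (q-1) := one_mul _
    have ht : Tendsto (fun r : ℝ => |r| ^ (q-1)) (nhds 0) (nhds 0) := by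
      have := (continuous_abs_rpow he.le).tendsto 0
      simpa [Real.zero_rpow he.ne'] using this
    exact squeeze_zero_norm hb ht
  · have hc : ContinuousAt (fun r : ℝ => |r| ^ (q-1)) x :=
      (continuous_abs_rpow he.le).continuousAt
    refine hc.congr ?_
    filter_upwards [Ioi_mem_nhds hx] with r hr
    simp [Sq, Real.sign_of_pos hr]

lemma sign_mul_pos {t b : ℝ} (ht : 0 < t) : Real.sign (t * b) = Real.sign b := by
  rcases lt_trichotomy b 0 with hb | hb | hb
  · rw [Real.sign_of_neg hb, Real.sign_of_neg (mul_neg_of_pos_of_neg ht hb)]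
  · simp [hb]
  · rw [Real.sign_of_pos hb, Real.sign_of_pos (mul_pos ht hb)]

lemma abs_mul_rpow {e t a : ℝ} (he : 0 ≤ e) (ht : 0 ≤ t) : |t * a| ^ e = t ^ e * |a| ^ e := by
  rw [abs_mul, abs_of_nonneg ht, Real.mul_rpow ht (abs_nonneg a)]

lemma Sq_smul {q t b : ℝ} (ht : 0 < t) : Sq q (t * b) = t ^ (q-1) * Sq q b := by
  rw [Sq, Sq, sign_mul_pos ht, abs_mul, abs_of_nonneg ht.le,
    Real.mul_rpow ht.le (abs_nonneg b)]
  ring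

lemma Dq_self (q a : ℝ) : Dq q a a = 0 := by simp [Dq]

lemma Dq_smul {q : ℝ} (hq : 1 < q) {t : ℝ} (ht : 0 < t) (a b : ℝ) :
    Dq q (t * a) (t * b) = t ^ q * Dq q a b := by
  have hq0 : (0:ℝ) < q := by linarith
  have h1 : t ^ (q-1) * t = t ^ q := by
    rw [← Real.rpow_add_one (ne_of_gt ht) (q-1)]; ring_nf
  rw [Dq, Dq, abs_mul_rpow hq0.le ht.le, abs_mul_rpow hq0.le ht.le, Sq_smul ht]
  have : t * a - t * b = t * (a - b) := by ring
  rw [this]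
  calc t ^ q * |a| ^ q - t ^ q * |b| ^ q - q * (t ^ (q-1) * Sq q b) * (t * (a-b))
      = t ^ q * |a| ^ q - t ^ q * |b| ^ q - (t ^ (q-1) * t) * (q * Sq q b * (a-b)) := by ring
    _ = t ^ q * (|a| ^ q - |b| ^ q - q * Sq q b * (a-b)) := by rw [h1]; ring

lemma Dq_neg (q a b : ℝ) : Dq q (-a) (-b) = Dq q a b := by
  simp only [Dq, Sq, abs_neg, Real.sign_neg]
  ring

lemma geomStrict {x y θ : ℝ} (hx : 0 < x) (hy : 0 < y) (hθ : 0 < θ) (hθ1 : θ < 1) (hxy : x ≠ y) :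
    x ^ θ * y ^ (1 - θ) < θ * x + (1 - θ) * y := by
  have h1θ : 0 < 1 - θ := by linarith
  have hlog := strictConcaveOn_log_Ioi.2 (mem_Ioi.2 hx) (mem_Ioi.2 hy) hxy hθ h1θ (by ring)
  have hL : Real.log (x ^ θ * y ^ (1-θ)) = θ * Real.log x + (1-θ) * Real.log y := by
    rw [Real.log_mul (ne_of_gt (Real.rpow_pos_of_pos hx θ)) (ne_of_gt (Real.rpow_pos_of_pos hy _)),
      Real.log_rpow hx, Real.log_rpow hy]
  have hlt : Real.log (x ^ θ * y ^ (1-θ)) < Real.log (θ * x + (1-θ) * y) := by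
    rw [hL]; simpa [smul_eq_mul] using hlog
  have hpos : 0 < x ^ θ * y ^ (1-θ) :=
    mul_pos (Real.rpow_pos_of_pos hx θ) (Real.rpow_pos_of_pos hy _)
  have hpos2 : 0 < θ * x + (1-θ) * y := by positivity
  exact (Real.log_lt_log_iff hpos hpos2).1 hlt

lemma Dq_pos_of_pos {q : ℝ} (hq : 1 < q) {a b : ℝ} (hb : 0 < b) (hab : a ≠ b) :
    0 < Dq q a b := by
  have hq0 : (0:ℝ) < q := by linarith
  have hSb : Sq q b = b ^ (q-1) := by rw [Sq, Real.sign_of_pos hb, abs_of_pos hb, one_mul]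
  have hbq1 : b ^ (q-1) * b = b ^ q := by
    rw [← Real.rpow_add_one (ne_of_gt hb) (q-1)]; ring_nf
  have habs : |b| ^ q = b ^ q := by rw [abs_of_pos hb]
  have hbqpos : 0 < b ^ q := Real.rpow_pos_of_pos hb q
  have hbq1pos : 0 < b ^ (q-1) := Real.rpow_pos_of_pos hb (q-1)
  have hdistrib : q * b ^ (q-1) * (a - b) = q * (b ^ (q-1) * a) - q * b ^ q := by
    rw [← hbq1]; ring
  rcases le_or_gt a 0 with ha | ha
  · have h1 : 0 ≤ |a| ^ q := Real.rpow_nonneg (abs_nonneg a) q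
    have hW : q * (b ^ (q-1) * a) ≤ 0 :=
      mul_nonpos_of_nonneg_of_nonpos hq0.le (mul_nonpos_of_nonneg_of_nonpos hbq1pos.le ha)
    have hqY : 0 < (q - 1) * b ^ q := mul_pos (by linarith) hbqpos
    rw [Dq, hSb, habs, hdistrib]
    linarith
  · have haq : |a| ^ q = a ^ q := by rw [abs_of_pos ha]
    have hgeom : (a ^ q) ^ (1/q) * (b ^ q) ^ (1 - 1/q) < (1/q) * a ^ q + (1 - 1/q) * b ^ q := by
      refine geomStrict (Real.rpow_pos_of_pos ha q) hbqpos
        (one_div_pos.2 hq0) (by rw [div_lt_one hq0]; linarith) ?_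
      intro h
      rcases lt_trichotomy a b with hlt | heq | hgt
      · exact absurd h (ne_of_lt (Real.rpow_lt_rpow ha.le hlt hq0))
      · exact hab heq
      · exact absurd h.symm (ne_of_lt (Real.rpow_lt_rpow hb.le hgt hq0))
    have hq1 : q * (1/q) = 1 := mul_one_div_cancel (ne_of_gt hq0)
    have e1 : (a ^ q) ^ (1/q) = a := by
      rw [← Real.rpow_mul ha.le, hq1, Real.rpow_one]
    have e2 : (b ^ q) ^ (1 - 1/q) = b ^ (q-1) := by
      rw [← Real.rpow_mul hb.le]
      congr 1
      field_simp
    rw [e1, e2] at hgeom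
    have hmul := mul_lt_mul_of_pos_left hgeom hq0
    have hr : q * (1 / q * a ^ q + (1 - 1 / q) * b ^ q) = a ^ q + (q - 1) * b ^ q := by
      field_simp
    rw [hr] at hmul
    rw [Dq, hSb, habs, haq, hdistrib]
    nlinarith [hmul]
  
lemma Dq_pos {q : ℝ} (hq : 1 < q) {a b : ℝ} (hab : a ≠ b) : 0 < Dq q a b := by
  have hq0 : (0:ℝ) < q := by linarith
  rcases lt_trichotomy b 0 with hb | hb | hb
  · rw [← Dq_neg]
    exact Dq_pos_of_pos hq (by linarith) (by intro h; exact hab (by linarith [neg_injective h]))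
  · subst hb
    have ha : a ≠ 0 := hab
    have : Dq q a 0 = |a| ^ q := by simp [Dq, Sq, Real.zero_rpow (sub_ne_zero.2 hq.ne'), Real.zero_rpow (ne_of_gt hq0)]
    rw [this]
    exact Real.rpow_pos_of_pos (abs_pos.2 ha) q
  · exact Dq_pos_of_pos hq hb hab

lemma Dq_nonneg {q : ℝ} (hq : 1 < q) (a b : ℝ) : 0 ≤ Dq q a b := by
  rcases eq_or_ne a b with h | h
  · subst h; rw [Dq_self]
  · exact (Dq_pos hq h).le

lemma homog_le {q : ℝ} (hq : 0 < q) (F G : ℝ → ℝ → ℝ)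
    (hFc : Continuous fun x : ℝ × ℝ => F x.1 x.2) (hGc : Continuous fun x : ℝ × ℝ => G x.1 x.2)
    (hFhom : ∀ t a b, 0 < t → F (t*a) (t*b) = t ^ q * F a b)
    (hGhom : ∀ t a b, 0 < t → G (t*a) (t*b) = t ^ q * G a b)
    (hF0 : F 0 0 = 0)
    (hGnn : ∀ a b, 0 ≤ G a b)
    (hFG : ∀ a b, a^2 + b^2 = 1 → G a b = 0 → F a b ≤ 0)
    {ε : ℝ} (hε : 0 < ε) :
    ∃ C, 0 < C ∧ ∀ a b, F a b ≤ ε * (|a| ^ q + |b| ^ q) + C * G a b := by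
  set H : ℝ → ℝ → ℝ := fun a b => |a| ^ q + |b| ^ q with hH
  have hHnn : ∀ a b, 0 ≤ H a b := fun a b =>
    add_nonneg (Real.rpow_nonneg (abs_nonneg a) q) (Real.rpow_nonneg (abs_nonneg b) q)
  have hHc : Continuous fun x : ℝ × ℝ => H x.1 x.2 :=
    ((continuous_abs_rpow hq.le).comp continuous_fst).add
      ((continuous_abs_rpow hq.le).comp continuous_snd)
  have hHpos : ∀ a b : ℝ, a^2 + b^2 = 1 → 0 < H a b := by
    intro a b hab
    rcases eq_or_ne a 0 with ha | ha
    · have hb : b ≠ 0 := by intro hb; rw [ha, hb] at hab; norm_num at hab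
      have : 0 < |b| ^ q := Real.rpow_pos_of_pos (abs_pos.2 hb) q
      have h2 : 0 ≤ |a| ^ q := Real.rpow_nonneg (abs_nonneg a) q
      simp only [hH]; linarith
    · have : 0 < |a| ^ q := Real.rpow_pos_of_pos (abs_pos.2 ha) q
      have h2 : 0 ≤ |b| ^ q := Real.rpow_nonneg (abs_nonneg b) q
      simp only [hH]; linarith
  -- the unit sphere
  set S : Set (ℝ × ℝ) := {x | x.1^2 + x.2^2 = 1} with hS
  have hSclosed : IsClosed S := isClosed_eq (by fun_prop) continuous_const
  have hSbdd : Bornology.IsBounded S := by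
    refine (Metric.isBounded_closedBall (x := (0:ℝ×ℝ)) (r := 1)).subset ?_
    intro x hx
    have hx1 : x.1^2 + x.2^2 = 1 := hx
    have h1 : |x.1| ≤ 1 := by
      rw [← sq_le_one_iff_abs_le_one]; nlinarith [sq_nonneg x.2]
    have h2 : |x.2| ≤ 1 := by
      rw [← sq_le_one_iff_abs_le_one]; nlinarith [sq_nonneg x.1]
    simp only [Metric.mem_closedBall, Prod.dist_eq, dist_zero_right, Real.norm_eq_abs]
    exact max_le h1 h2
  have hScompact : IsCompact S := Metric.isCompact_of_isClosed_isBounded hSclosed hSbdd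
  -- the bad set
  set K : Set (ℝ × ℝ) := S ∩ {x | ε * H x.1 x.2 ≤ F x.1 x.2} with hK
  have hKcompact : IsCompact K :=
    hScompact.inter_right (isClosed_le (hHc.const_smul ε) hFc)
  have key : ∃ C, 0 < C ∧ ∀ x ∈ S, F x.1 x.2 ≤ ε * H x.1 x.2 + C * G x.1 x.2 := by
    rcases K.eq_empty_or_nonempty with hKe | hKne
    · refine ⟨1, one_pos, fun x hx => ?_⟩
      have hxK : x ∉ K := by rw [hKe]; exact Set.notMem_empty x
      have : ¬ ε * H x.1 x.2 ≤ F x.1 x.2 := by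
        intro h; exact hxK ⟨hx, h⟩
      have hG := hGnn x.1 x.2
      linarith [lt_of_not_ge this]
    · obtain ⟨z, hzK, hzmin⟩ := hKcompact.exists_isMinOn hKne
        ((hGc.comp continuous_id).continuousOn)
      obtain ⟨w, hwK, hwmax⟩ := hKcompact.exists_isMaxOn hKne
        ((hFc.comp continuous_id).continuousOn)
      have hzS : z ∈ S := hzK.1
      have hGz : 0 < G z.1 z.2 := by
        rcases lt_or_eq_of_le (hGnn z.1 z.2) with h | h
        · exact h
        · exfalso
          have hF0' : F z.1 z.2 ≤ 0 := hFG z.1 z.2 hzS h.symm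
          have : ε * H z.1 z.2 ≤ F z.1 z.2 := hzK.2
          have hHz : 0 < H z.1 z.2 := hHpos z.1 z.2 hzS
          nlinarith
      set C : ℝ := max (F w.1 w.2 / G z.1 z.2) 1 with hC
      refine ⟨C, lt_of_lt_of_le one_pos (le_max_right _ _), fun x hx => ?_⟩
      by_cases hxK : x ∈ K
      · have h1 : F x.1 x.2 ≤ F w.1 w.2 := hwmax hxK
        have h2 : G z.1 z.2 ≤ G x.1 x.2 := hzmin hxK
        have h3 : F w.1 w.2 = (F w.1 w.2 / G z.1 z.2) * G z.1 z.2 := by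
          field_simp
        have h4 : (F w.1 w.2 / G z.1 z.2) * G z.1 z.2 ≤ C * G z.1 z.2 :=
          mul_le_mul_of_nonneg_right (le_max_left _ _) hGz.le
        have h5 : C * G z.1 z.2 ≤ C * G x.1 x.2 :=
          mul_le_mul_of_nonneg_left h2 (by positivity)
        have h6 : 0 ≤ ε * H x.1 x.2 := mul_nonneg hε.le (hHnn _ _)
        linarith
      · have : ¬ ε * H x.1 x.2 ≤ F x.1 x.2 := by
          intro h; exact hxK ⟨hx, h⟩
        have hG := hGnn x.1 x.2
        have : F x.1 x.2 < ε * H x.1 x.2 := lt_of_not_ge this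
        nlinarith [mul_nonneg (le_of_lt (lt_of_lt_of_le one_pos (le_max_right (F w.1 w.2 / G z.1 z.2) 1))) hG]
  obtain ⟨C, hCpos, hCS⟩ := key
  refine ⟨C, hCpos, fun a b => ?_⟩
  by_cases h0 : a = 0 ∧ b = 0
  · rw [h0.1, h0.2, hF0]
    have : (0:ℝ) ≤ C * G 0 0 := mul_nonneg hCpos.le (hGnn 0 0)
    have h00 : |(0:ℝ)| ^ q = 0 := by rw [abs_zero, Real.zero_rpow hq.ne']
    rw [h00]; linarith
  · have hab : 0 < a^2 + b^2 := by
      rcases not_and_or.1 h0 with h | h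
      · have : 0 < a^2 := by positivity
        nlinarith [sq_nonneg b]
      · have : 0 < b^2 := by positivity
        nlinarith [sq_nonneg a]
    set t : ℝ := Real.sqrt (a^2 + b^2) with htdef
    have ht : 0 < t := Real.sqrt_pos.2 hab
    have ht2 : t^2 = a^2 + b^2 := Real.sq_sqrt hab.le
    have hmem : (a/t, b/t) ∈ S := by
      simp only [hS, Set.mem_setOf_eq]
      field_simp
      linarith [ht2]
    have ha' : a = t * (a/t) := by field_simp
    have hb' : b = t * (b/t) := by field_simp
    have hFa : F a b = t ^ q * F (a/t) (b/t) := by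
      conv_lhs => rw [ha', hb']
      exact hFhom t _ _ ht
    have hGa : G a b = t ^ q * G (a/t) (b/t) := by
      conv_lhs => rw [ha', hb']
      exact hGhom t _ _ ht
    have hHa : |a| ^ q = t ^ q * |a/t| ^ q := by
      conv_lhs => rw [ha']
      exact abs_mul_rpow hq.le ht.le
    have hHb : |b| ^ q = t ^ q * |b/t| ^ q := by
      conv_lhs => rw [hb']
      exact abs_mul_rpow hq.le ht.le
    have hs := hCS (a/t, b/t) hmem
    have htq : 0 < t ^ q := Real.rpow_pos_of_pos ht q
    calc F a b = t ^ q * F (a/t) (b/t) := hFa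
      _ ≤ t ^ q * (ε * H (a/t) (b/t) + C * G (a/t) (b/t)) :=
          mul_le_mul_of_nonneg_left hs htq.le
      _ = ε * (|a| ^ q + |b| ^ q) + C * G a b := by
          rw [hGa, hHa, hHb]; simp only [hH]; ring

lemma continuous_Dq_pair {q : ℝ} (hq : 1 < q) :
    Continuous fun x : ℝ × ℝ => Dq q x.1 x.2 := by
  have hq0 : (0:ℝ) ≤ q := by linarith
  have h1 : Continuous fun x : ℝ × ℝ => |x.1| ^ q := (continuous_abs_rpow hq0).comp continuous_fst
  have h2 : Continuous fun x : ℝ × ℝ => |x.2| ^ q := (continuous_abs_rpow hq0).comp continuous_snd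
  have h3 : Continuous fun x : ℝ × ℝ => q * Sq q x.2 * (x.1 - x.2) :=
    (continuous_const.mul ((continuous_Sq hq).comp continuous_snd)).mul
      (continuous_fst.sub continuous_snd)
  exact (h1.sub h2).sub h3

lemma cor1 {q : ℝ} (hq : 1 < q) {ε : ℝ} (hε : 0 < ε) :
    ∃ C, 0 < C ∧ ∀ a b : ℝ, |a - b| ^ q ≤ ε * (|a| ^ q + |b| ^ q) + C * Dq q a b := by
  have hq0 : (0:ℝ) < q := by linarith
  refine homog_le hq0 (fun a b => |a - b| ^ q) (Dq q) ?_ (continuous_Dq_pair hq) ?_ ?_ ?_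
    (Dq_nonneg hq) ?_ hε
  · exact (continuous_abs_rpow hq0.le).comp (continuous_fst.sub continuous_snd)
  · intro t a b ht
    show |t * a - t * b| ^ q = t ^ q * |a - b| ^ q
    have h : t * a - t * b = t * (a - b) := by ring
    rw [h, abs_mul_rpow hq0.le ht.le]
  · exact fun t a b ht => Dq_smul hq ht a b
  · simp [Real.zero_rpow hq0.ne']
  · intro a b _ hD
    have : a = b := by
      by_contra h
      exact absurd hD (ne_of_gt (Dq_pos hq h))
    rw [this]
    simp [Real.zero_rpow hq0.ne']

lemma cor2 {q : ℝ} (hq : 1 < q) {ε : ℝ} (hε : 0 < ε) :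
    ∃ C, 0 < C ∧ ∀ a b : ℝ, Dq q a b ≤ ε * (|a| ^ q + |b| ^ q) + C * |a - b| ^ q := by
  have hq0 : (0:ℝ) < q := by linarith
  refine homog_le hq0 (Dq q) (fun a b => |a - b| ^ q) (continuous_Dq_pair hq) ?_ ?_ ?_ ?_ ?_ ?_ hε
  · exact (continuous_abs_rpow hq0.le).comp (continuous_fst.sub continuous_snd)
  · exact fun t a b ht => Dq_smul hq ht a b
  · intro t a b ht
    show |t * a - t * b| ^ q = t ^ q * |a - b| ^ q
    have h : t * a - t * b = t * (a - b) := by ring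
    rw [h, abs_mul_rpow hq0.le ht.le]
  · rw [Dq_self]
  · exact fun a b => Real.rpow_nonneg (abs_nonneg _) q
  · intro a b _ hab
    have : a = b := by
      have h2 : |a - b| = 0 := (Real.rpow_eq_zero (abs_nonneg (a-b)) hq0.ne').1 hab
      have := abs_eq_zero.1 h2
      linarith
    rw [this, Dq_self]

lemma add_rpow_le {q u v : ℝ} (hq : 0 ≤ q) (hu : 0 ≤ u) (hv : 0 ≤ v) :
    (u + v) ^ q ≤ 2 ^ q * (u ^ q + v ^ q) := by
  have h2 : (0:ℝ) ≤ 2 ^ q := Real.rpow_nonneg (by norm_num) q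
  rcases le_total u v with h | h
  · calc (u + v) ^ q ≤ (2 * v) ^ q :=
        Real.rpow_le_rpow (by linarith) (by linarith) hq
      _ = 2 ^ q * v ^ q := Real.mul_rpow (by norm_num) hv
      _ ≤ 2 ^ q * (u ^ q + v ^ q) := by
          have : (0:ℝ) ≤ u ^ q := Real.rpow_nonneg hu q
          nlinarith [Real.rpow_nonneg hv q]
  · calc (u + v) ^ q ≤ (2 * u) ^ q :=
        Real.rpow_le_rpow (by linarith) (by linarith) hq
      _ = 2 ^ q * u ^ q := Real.mul_rpow (by norm_num) hu
      _ ≤ 2 ^ q * (u ^ q + v ^ q) := by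
          have : (0:ℝ) ≤ v ^ q := Real.rpow_nonneg hv q
          nlinarith [Real.rpow_nonneg hu q]

section MeasureAux

variable {Z : Type*} [MetricSpace Z] [CompactSpace Z] [MeasurableSpace Z] [BorelSpace Z]

lemma cont_bound {f : Z → ℝ} (hf : Continuous f) : ∃ C, ∀ x, |f x| ≤ C := by
  obtain ⟨C, hC⟩ := (isCompact_univ (X := Z)).exists_bound_of_continuousOn hf.continuousOn
  exact ⟨C, fun x => by simpa [Real.norm_eq_abs] using hC x trivial⟩

lemma cont_memLp {f : Z → ℝ} (hf : Continuous f) (P : ℝ≥0∞) (μ : Measure Z)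
    [IsFiniteMeasure μ] : MemLp f P μ := by
  obtain ⟨C, hC⟩ := cont_bound hf
  exact (memLp_top_of_bound hf.aestronglyMeasurable C
    (Filter.Eventually.of_forall fun x => by simpa [Real.norm_eq_abs] using hC x)).mono_exponent
    le_top

lemma cont_integrable {f : Z → ℝ} (hf : Continuous f) (μ : Measure Z) [IsFiniteMeasure μ] :
    Integrable f μ := (cont_memLp hf 1 μ).integrable le_rfl

lemma int_abs_rpow {q : ℝ} (hq0 : 0 < q) {μ : Measure Z} {f : Z → ℝ}
    (hf : MemLp f (ENNReal.ofReal q) μ) : Integrable (fun x => |f x| ^ q) μ := by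
  have h := hf.integrable_norm_rpow (by simp [ENNReal.ofReal_eq_zero]; linarith) ENNReal.ofReal_ne_top
  simpa [Real.norm_eq_abs, ENNReal.toReal_ofReal hq0.le] using h

lemma int_Sq_mul {q : ℝ} (hq : 1 < q) {μ : Measure Z} [IsFiniteMeasure μ] {f φ : Z → ℝ}
    (hf : Integrable f μ) (hφ : Continuous φ) :
    Integrable (fun x => Sq q (φ x) * f x) μ := by
  obtain ⟨C, hC⟩ := cont_bound ((continuous_Sq hq).comp hφ)
  exact hf.bdd_mul (((continuous_Sq hq).comp hφ)).aestronglyMeasurable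
    (ae_of_all _ fun x => by simpa [Real.norm_eq_abs] using hC x)

lemma Dq_comp_eq {q : ℝ} (f φ : Z → ℝ) :
    (fun x => Dq q (f x) (φ x)) = fun x =>
      (|f x| ^ q - |φ x| ^ q) - q * (Sq q (φ x) * f x - Sq q (φ x) * φ x) := by
  funext x; rw [Dq]; ring

lemma int_Dq {q : ℝ} (hq : 1 < q) {μ : Measure Z} [IsFiniteMeasure μ] {f φ : Z → ℝ}
    (hfm : MemLp f (ENNReal.ofReal q) μ) (hfint : Integrable f μ) (hφ : Continuous φ) :
    Integrable (fun x => Dq q (f x) (φ x)) μ := by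
  have hq0 : (0:ℝ) < q := by linarith
  rw [Dq_comp_eq]
  exact ((int_abs_rpow hq0 hfm).sub
      (cont_integrable ((continuous_abs_rpow hq0.le).comp hφ) μ)).sub
    (((int_Sq_mul hq hfint hφ).sub
      (int_Sq_mul hq (cont_integrable hφ μ) hφ)).const_mul q)

lemma integral_Dq {q : ℝ} (hq : 1 < q) {μ : Measure Z} [IsFiniteMeasure μ] {f φ : Z → ℝ}
    (hfm : MemLp f (ENNReal.ofReal q) μ) (hfint : Integrable f μ) (hφ : Continuous φ) :
    ∫ x, Dq q (f x) (φ x) ∂μ = (∫ x, |f x| ^ q ∂μ) - (∫ x, |φ x| ^ q ∂μ)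
      - q * (∫ x, Sq q (φ x) * f x ∂μ) + q * (∫ x, Sq q (φ x) * φ x ∂μ) := by
  have hq0 : (0:ℝ) < q := by linarith
  have i1 : Integrable (fun x => |f x| ^ q) μ := int_abs_rpow hq0 hfm
  have i2 : Integrable (fun x => |φ x| ^ q) μ :=
    cont_integrable ((continuous_abs_rpow hq0.le).comp hφ) μ
  have i3 : Integrable (fun x => Sq q (φ x) * f x) μ := int_Sq_mul hq hfint hφ
  have i4 : Integrable (fun x => Sq q (φ x) * φ x) μ := int_Sq_mul hq (cont_integrable hφ μ) hφ
  have i12 : Integrable (fun x => |f x| ^ q - |φ x| ^ q) μ := i1.sub i2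
  have i34 : Integrable (fun x => q * (Sq q (φ x) * f x - Sq q (φ x) * φ x)) μ :=
    (i3.sub i4).const_mul q
  rw [Dq_comp_eq]
  rw [integral_sub i12 i34, integral_sub i1 i2, MeasureTheory.integral_const_mul, integral_sub i3 i4]
  ring

end MeasureAux

set_option maxHeartbeats 1000000

/-- Weak convergence of measures on a topological space, in duality with continuous
(bounded, as `Z` will be compact) functions. -/
def WeakConvMeasures {Z : Type*} [TopologicalSpace Z] [MeasurableSpace Z]
    (mn : ℕ → Measure Z) (m : Measure Z) : Prop :=
  ∀ φ : Z → ℝ, Continuous φ →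
    Tendsto (fun n => ∫ x, φ x ∂(mn n)) atTop (nhds (∫ x, φ x ∂m))

/-- `L^p`-weak convergence of functions `u n ∈ L^p(mn n)` to `uL ∈ L^p(m)` with varying
reference measures: uniformly bounded `L^p`-norms and `u n · (mn n) ⇀ uL · m` in duality
with continuous functions. -/
def LpWeakConv {Z : Type*} [TopologicalSpace Z] [MeasurableSpace Z] (p : ℝ)
    (mn : ℕ → Measure Z) (m : Measure Z) (u : ℕ → Z → ℝ) (uL : Z → ℝ) : Prop :=
  (∃ M : ℝ, ∀ n, (∫ x, |u n x| ^ p ∂(mn n)) ^ (1 / p) ≤ M) ∧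
  ∀ φ : Z → ℝ, Continuous φ →
    Tendsto (fun n => ∫ x, φ x * u n x ∂(mn n)) atTop (nhds (∫ x, φ x * uL x ∂m))

/-- `L^p`-strong convergence with varying reference measures: `L^p`-weak convergence plus
`limsup_n ‖u n‖_{L^p(mn n)} ≤ ‖uL‖_{L^p(m)}`. -/
def LpStrongConv {Z : Type*} [TopologicalSpace Z] [MeasurableSpace Z] (p : ℝ)
    (mn : ℕ → Measure Z) (m : Measure Z) (u : ℕ → Z → ℝ) (uL : Z → ℝ) : Prop :=
  LpWeakConv p mn m u uL ∧
    limsup (fun n => (∫ x, |u n x| ^ p ∂(mn n)) ^ (1 / p)) atTop ≤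
      (∫ x, |uL x| ^ p ∂m) ^ (1 / p)

/-- If `u n → uL` `L^q`-strongly and `v n → vL` `L^p`-weakly, `1/p + 1/q = 1`, along a
weakly converging sequence of finite Borel measures on a compact metric space, then
`∫ u n · v n d(mn n) → ∫ uL · vL dm`. -/

theorem tendsto_integral_mul_of_strong_weak
    {Z : Type*} [MetricSpace Z] [CompactSpace Z] [MeasurableSpace Z] [BorelSpace Z]
    (mn : ℕ → Measure Z) (m : Measure Z)
    [∀ n, IsFiniteMeasure (mn n)] [IsFiniteMeasure m]
    (hw : WeakConvMeasures mn m)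
    (p q : ℝ) (hp : 1 < p) (hq : 1 < q) (hpq : 1 / p + 1 / q = 1)
    (u : ℕ → Z → ℝ) (uL : Z → ℝ) (v : ℕ → Z → ℝ) (vL : Z → ℝ)
    (humeas : ∀ n, Measurable (u n)) (huLmeas : Measurable uL)
    (hvmeas : ∀ n, Measurable (v n)) (hvLmeas : Measurable vL)
    (hu : ∀ n, MemLp (u n) (ENNReal.ofReal q) (mn n))
    (huL : MemLp uL (ENNReal.ofReal q) m)
    (hv : ∀ n, MemLp (v n) (ENNReal.ofReal p) (mn n))
    (hvL : MemLp vL (ENNReal.ofReal p) m)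
    (hus : LpStrongConv q mn m u uL)
    (hvw : LpWeakConv p mn m v vL) :
    Tendsto (fun n => ∫ x, u n x * v n x ∂(mn n)) atTop
      (nhds (∫ x, uL x * vL x ∂m)) := by
  classical
  obtain ⟨⟨⟨Mu, hMu⟩, huweak⟩, hulimsup⟩ := hus
  obtain ⟨⟨Mv, hMv⟩, hvweak⟩ := hvw
  have hq0 : (0:ℝ) < q := lt_trans one_pos hq
  have hp0 : (0:ℝ) < p := lt_trans one_pos hp
  have hQ1 : (1:ℝ≥0∞) ≤ ENNReal.ofReal q := by
    rw [← ENNReal.ofReal_one]; exact ENNReal.ofReal_le_ofReal hq.le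
  have hP1 : (1:ℝ≥0∞) ≤ ENNReal.ofReal p := by
    rw [← ENNReal.ofReal_one]; exact ENNReal.ofReal_le_ofReal hp.le
  have hconj : q.HolderConjugate p :=
    ⟨by rw [inv_one, inv_eq_one_div, inv_eq_one_div]; linarith, hq0, hp0⟩
  have huint : ∀ n, Integrable (u n) (mn n) := fun n => (hu n).integrable hQ1
  have hvint : ∀ n, Integrable (v n) (mn n) := fun n => (hv n).integrable hP1
  have huLint : Integrable uL m := huL.integrable hQ1
  have hvLint : Integrable vL m := hvL.integrable hP1
  have rpow_q_inv : ∀ r : ℝ, 0 ≤ r → (r ^ (1/q)) ^ q = r := by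
    intro r hr
    rw [← Real.rpow_mul hr, one_div_mul_cancel hq0.ne', Real.rpow_one]
  have rpow_q_inv' : ∀ r : ℝ, 0 ≤ r → (r ^ q) ^ (1/q) = r := by
    intro r hr
    rw [← Real.rpow_mul hr, mul_one_div_cancel hq0.ne', Real.rpow_one]
  have hA0' : 0 ≤ ∫ x, |uL x| ^ q ∂m :=
    integral_nonneg fun x => Real.rpow_nonneg (abs_nonneg _) q
  set A : ℝ := ∫ x, |uL x| ^ q ∂m with hA
  have hA0 : 0 ≤ A := hA0'
  clear_value A
  have hMv'0' : (0:ℝ) ≤ max Mv 0 := le_max_right _ _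
  have hMv'b : ∀ n, (∫ x, |v n x| ^ p ∂(mn n)) ^ (1/p) ≤ max Mv 0 :=
    fun n => le_trans (hMv n) (le_max_left _ _)
  set Mv' : ℝ := max Mv 0 with hMv'def
  have hMv'0 : 0 ≤ Mv' := hMv'0'
  have hMv' : ∀ n, (∫ x, |v n x| ^ p ∂(mn n)) ^ (1/p) ≤ Mv' := hMv'b
  clear_value Mv'
  have hKv0' : 0 ≤ (∫ x, |vL x| ^ p ∂m) ^ (1/p) :=
    Real.rpow_nonneg (integral_nonneg fun x => Real.rpow_nonneg (abs_nonneg _) p) _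
  set Kv : ℝ := (∫ x, |vL x| ^ p ∂m) ^ (1/p) with hKvdef
  have hKv0 : 0 ≤ Kv := hKv0'
  clear_value Kv
  have hIun : ∀ n, 0 ≤ ∫ x, |u n x| ^ q ∂(mn n) :=
    fun n => integral_nonneg fun x => Real.rpow_nonneg (abs_nonneg _) q
  have hMuQb' : ∀ n, ∫ x, |u n x| ^ q ∂(mn n) ≤ (max Mu 0) ^ q := by
    intro n
    have h1 : (∫ x, |u n x| ^ q ∂(mn n)) ^ (1/q) ≤ max Mu 0 :=
      le_trans (hMu n) (le_max_left _ _)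
    have h2 := Real.rpow_le_rpow (Real.rpow_nonneg (hIun n) _) h1 hq0.le
    rwa [rpow_q_inv _ (hIun n)] at h2
  set MuQ : ℝ := (max Mu 0) ^ q with hMuQ
  have hMuQb : ∀ n, ∫ x, |u n x| ^ q ∂(mn n) ≤ MuQ := hMuQb'
  have hMuQ0 : 0 ≤ MuQ := le_trans (hIun 0) (hMuQb 0)
  clear_value MuQ
  rw [Metric.tendsto_nhds]
  intro δ hδ
  -- constants
  have hδ1pos' : 0 < (δ/(3*(Mv'+1))) ^ q :=
    Real.rpow_pos_of_pos (div_pos hδ (by linarith only [hMv'0])) q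
  set δ1 : ℝ := (δ/(3*(Mv'+1))) ^ q with hδ1def
  have hδ1pos : 0 < δ1 := hδ1pos'
  clear_value δ1
  have h2q0 : (0:ℝ) < 2 ^ q := Real.rpow_pos_of_pos (by norm_num) q
  have hA2pos' : (0:ℝ) < 2 ^ q * (A+1) + 1 := by nlinarith only [h2q0, hA0]
  set A2 : ℝ := 2 ^ q * (A+1) + 1 with hA2def
  have hA2pos : 0 < A2 := hA2pos'
  clear_value A2
  have hε1pos' : 0 < δ1/(2*(MuQ + A2 + 1)) := div_pos hδ1pos (by linarith only [hMuQ0, hA2pos])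
  set ε1 : ℝ := δ1/(2*(MuQ + A2 + 1)) with hε1def
  have hε1pos : 0 < ε1 := hε1pos'
  clear_value ε1
  obtain ⟨C1, hC1pos, hC1⟩ := cor1 hq hε1pos
  have hδ2pos' : 0 < δ1/(2*(C1+1)) := div_pos hδ1pos (by linarith)
  set δ2 : ℝ := δ1/(2*(C1+1)) with hδ2def
  have hδ2pos : 0 < δ2 := hδ2pos'
  clear_value δ2
  have hε2pos' : 0 < min (δ2/(8*(q+1))) 1 := lt_min (div_pos hδ2pos (by linarith)) one_pos
  set ε2 : ℝ := min (δ2/(8*(q+1))) 1 with hε2def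
  have hε2pos : 0 < ε2 := hε2pos'
  have hε2a : ε2 ≤ δ2/(8*(q+1)) := min_le_left _ _
  have hε2b : ε2 ≤ 1 := min_le_right _ _
  clear_value ε2
  have hε3pos' : 0 < δ2/(4*(A + A2 + 1)) := div_pos hδ2pos (by linarith only [hA0, hA2pos])
  set ε3 : ℝ := δ2/(4*(A + A2 + 1)) with hε3def
  have hε3pos : 0 < ε3 := hε3pos'
  clear_value ε3
  obtain ⟨C2, hC2pos, hC2⟩ := cor2 hq hε3pos
  have hδφpos' : 0 < min 1 (min (δ2/(4*(C2+1))) ((δ/(3*(Kv+1))) ^ q)) :=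
    lt_min one_pos (lt_min (div_pos hδ2pos (by linarith))
      (Real.rpow_pos_of_pos (div_pos hδ (by linarith only [hKv0])) q))
  set δφ : ℝ := min 1 (min (δ2/(4*(C2+1))) ((δ/(3*(Kv+1))) ^ q)) with hδφdef
  have hδφpos : 0 < δφ := hδφpos'
  have hδφle1 : δφ ≤ 1 := min_le_left _ _
  have hδφle2 : δφ ≤ δ2/(4*(C2+1)) := le_trans (min_le_right _ _) (min_le_left _ _)
  have hδφle3 : δφ ≤ (δ/(3*(Kv+1))) ^ q := le_trans (min_le_right _ _) (min_le_right _ _)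
  clear_value δφ
  -- density: get the continuous approximation φ
  have hQne : (ENNReal.ofReal q) ≠ ∞ := ENNReal.ofReal_ne_top
  have hQne0 : (ENNReal.ofReal q) ≠ 0 := by
    simp only [ne_eq, ENNReal.ofReal_eq_zero, not_le]; exact hq0
  have hδφ' : (ENNReal.ofReal (δφ ^ (1/q))) ≠ 0 := by
    simp only [ne_eq, ENNReal.ofReal_eq_zero, not_le]
    exact Real.rpow_pos_of_pos hδφpos _
  obtain ⟨φb, hφsub, hφmem⟩ := huL.exists_boundedContinuous_eLpNorm_sub_le hQne hδφ'
  set φ : Z → ℝ := fun x => φb x with hφdef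
  have hφc : Continuous φ := φb.continuous
  have hφmemq : MemLp φ (ENNReal.ofReal q) m := cont_memLp hφc _ m
  have hsubmem : MemLp (uL - φ) (ENNReal.ofReal q) m := huL.sub hφmemq
  have hφq : ∫ x, |uL x - φ x| ^ q ∂m ≤ δφ := by
    have heq := hsubmem.eLpNorm_eq_integral_rpow_norm hQne0 hQne
    rw [heq] at hφsub
    have h1 := (ENNReal.ofReal_le_ofReal_iff (Real.rpow_nonneg hδφpos.le _)).1 hφsub
    rw [ENNReal.toReal_ofReal hq0.le] at h1
    have h2 : ∫ x, ‖(uL - φ) x‖ ^ q ∂m = ∫ x, |uL x - φ x| ^ q ∂m := by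
      simp only [Pi.sub_apply, Real.norm_eq_abs]
    rw [h2] at h1
    have h3 : 0 ≤ ∫ x, |uL x - φ x| ^ q ∂m :=
      integral_nonneg fun x => Real.rpow_nonneg (abs_nonneg _) q
    have h4 := Real.rpow_le_rpow (Real.rpow_nonneg h3 _) h1 hq0.le
    rw [← one_div, rpow_q_inv _ h3, rpow_q_inv _ hδφpos.le] at h4
    exact h4
  -- integrability over m
  have hsubint : Integrable (fun x => |uL x - φ x| ^ q) m := by
    have := int_abs_rpow hq0 hsubmem
    simpa only [Pi.sub_apply] using this
  have huLqint : Integrable (fun x => |uL x| ^ q) m := int_abs_rpow hq0 huL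
  have hφqint : Integrable (fun x => |φ x| ^ q) m :=
    cont_integrable ((continuous_abs_rpow hq0.le).comp hφc) m
  -- bound on ∫ |φ|^q dm
  have hφA2 : ∫ x, |φ x| ^ q ∂m ≤ 2 ^ q * (A + 1) := by
    have hpt : ∀ x, |φ x| ^ q ≤ 2 ^ q * (|uL x| ^ q + |uL x - φ x| ^ q) := by
      intro x
      have h1 : |φ x| ≤ |uL x| + |uL x - φ x| := by
        calc |φ x| = |uL x + (φ x - uL x)| := by ring_nf
          _ ≤ |uL x| + |φ x - uL x| := abs_add_le _ _
          _ = |uL x| + |uL x - φ x| := by rw [abs_sub_comm]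
      calc |φ x| ^ q ≤ (|uL x| + |uL x - φ x|) ^ q :=
            Real.rpow_le_rpow (abs_nonneg _) h1 hq0.le
        _ ≤ 2 ^ q * (|uL x| ^ q + |uL x - φ x| ^ q) :=
            add_rpow_le hq0.le (abs_nonneg _) (abs_nonneg _)
    calc ∫ x, |φ x| ^ q ∂m ≤ ∫ x, 2 ^ q * (|uL x| ^ q + |uL x - φ x| ^ q) ∂m :=
          integral_mono hφqint ((huLqint.add hsubint).const_mul _) hpt
      _ = 2 ^ q * (A + ∫ x, |uL x - φ x| ^ q ∂m) := by
          rw [hA, MeasureTheory.integral_const_mul, integral_add huLqint hsubint]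
      _ ≤ 2 ^ q * (A + 1) := by
          have h1 := le_trans hφq hδφle1
          nlinarith only [h1, h2q0]
  -- bound on ∫ Dq(uL, φ) dm
  have hDexp := integral_Dq hq huL huLint hφc
  rw [← hA] at hDexp
  have hDm_int : Integrable (fun x => Dq q (uL x) (φ x)) m := int_Dq hq huL huLint hφc
  have hDinfty : ∫ x, Dq q (uL x) (φ x) ∂m ≤ δ2/2 := by
    have hpt : ∀ x, Dq q (uL x) (φ x) ≤
        ε3 * (|uL x| ^ q + |φ x| ^ q) + C2 * |uL x - φ x| ^ q := fun x => hC2 _ _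
    have hint2 : Integrable
        (fun x => ε3 * (|uL x| ^ q + |φ x| ^ q) + C2 * |uL x - φ x| ^ q) m :=
      (((huLqint.add hφqint)).const_mul ε3).add (hsubint.const_mul C2)
    have hstep : ∫ x, Dq q (uL x) (φ x) ∂m ≤
        ε3 * (A + ∫ x, |φ x| ^ q ∂m) + C2 * ∫ x, |uL x - φ x| ^ q ∂m := by
      calc ∫ x, Dq q (uL x) (φ x) ∂m
          ≤ ∫ x, ε3 * (|uL x| ^ q + |φ x| ^ q) + C2 * |uL x - φ x| ^ q ∂m :=
            integral_mono hDm_int hint2 hpt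
        _ = ε3 * (A + ∫ x, |φ x| ^ q ∂m) + C2 * ∫ x, |uL x - φ x| ^ q ∂m := by
            have ha : Integrable (fun x => ε3 * (|uL x| ^ q + |φ x| ^ q)) m :=
              (huLqint.add hφqint).const_mul ε3
            have hb : Integrable (fun x => C2 * |uL x - φ x| ^ q) m :=
              hsubint.const_mul C2
            have hc : Integrable (fun x => |uL x| ^ q + |φ x| ^ q) m := huLqint.add hφqint
            rw [hA, integral_add ha hb, MeasureTheory.integral_const_mul,
              MeasureTheory.integral_const_mul, integral_add huLqint hφqint]
    have hJA2 : ∫ x, |φ x| ^ q ∂m ≤ A2 := by rw [hA2def]; linarith only [hφA2]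
    have hne1 : A + A2 + 1 ≠ 0 := ne_of_gt (by linarith only [hA0, hA2pos])
    have hε3b : ε3 * (A + A2 + 1) = δ2/4 := by
      rw [hε3def]; field_simp
    have hne2 : C2 + 1 ≠ 0 := ne_of_gt (by linarith only [hC2pos])
    have hC2b : (δ2/(4*(C2+1))) * (C2+1) = δ2/4 := by
      field_simp
    have h1 : ε3 * (A + ∫ x, |φ x| ^ q ∂m) ≤ δ2/4 := by
      have := mul_le_mul_of_nonneg_left
        (show A + ∫ x, |φ x| ^ q ∂m ≤ A + A2 + 1 by linarith only [hJA2]) hε3pos.le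
      linarith only [this, hε3b]
    have h2 : C2 * ∫ x, |uL x - φ x| ^ q ∂m ≤ δ2/4 := by
      have hle : ∫ x, |uL x - φ x| ^ q ∂m ≤ δ2/(4*(C2+1)) := le_trans hφq hδφle2
      have h3 : C2 * ∫ x, |uL x - φ x| ^ q ∂m ≤ C2 * (δ2/(4*(C2+1))) :=
        mul_le_mul_of_nonneg_left hle hC2pos.le
      have h4 : C2 * (δ2/(4*(C2+1))) ≤ (δ2/(4*(C2+1))) * (C2+1) := by
        have hd : 0 < δ2/(4*(C2+1)) := div_pos hδ2pos (by linarith only [hC2pos])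
        nlinarith only [hd, hC2pos]
      linarith only [h3, h4, hC2b]
    linarith only [hstep, h1, h2]
  -- eventual estimates
  have hbdd : IsBoundedUnder (· ≤ ·) atTop
      (fun n => (∫ x, |u n x| ^ q ∂(mn n)) ^ (1/q)) :=
    ⟨Mu, eventually_map.2 (Eventually.of_forall hMu)⟩
  have hE1 : ∀ᶠ n in atTop, ∫ x, |u n x| ^ q ∂(mn n) ≤ A + ε2 := by
    have hcont : Tendsto (fun t : ℝ => (A ^ (1/q) + t) ^ q) (nhds 0) (nhds A) := by
      have h1 : ContinuousAt (fun t : ℝ => A ^ (1/q) + t) 0 := by fun_prop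
      have h2 : ContinuousAt (fun s : ℝ => s ^ q) (A ^ (1/q) + 0) :=
        Real.continuousAt_rpow_const _ _ (Or.inr hq0.le)
      have h3 : ContinuousAt (fun t : ℝ => (A ^ (1/q) + t) ^ q) 0 := h2.comp h1
      have hval : (A ^ (1/q) + 0) ^ q = A := by
        rw [add_zero, rpow_q_inv A hA0]
      rw [ContinuousAt, hval] at h3
      exact h3
    have hev : ∀ᶠ t : ℝ in nhds 0, (A ^ (1/q) + t) ^ q < A + ε2 :=
      hcont.eventually (gt_mem_nhds (by linarith : A < A + ε2))
    obtain ⟨s, hs0, hs⟩ := Metric.eventually_nhds_iff.1 hev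
    have hη : (A ^ (1/q) + s/2) ^ q < A + ε2 := by
      refine hs ?_
      rw [Real.dist_eq]
      rw [abs_of_pos (by linarith)]
      linarith
    have hlim : limsup (fun n => (∫ x, |u n x| ^ q ∂(mn n)) ^ (1/q)) atTop
        < A ^ (1/q) + s/2 := lt_of_le_of_lt hulimsup (by linarith)
    filter_upwards [eventually_lt_of_limsup_lt hlim hbdd] with n hn
    have h1 : (∫ x, |u n x| ^ q ∂(mn n)) ^ (1/q) ≤ A ^ (1/q) + s/2 := hn.le
    have h2 := Real.rpow_le_rpow (Real.rpow_nonneg (hIun n) _) h1 hq0.le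
    rw [rpow_q_inv _ (hIun n)] at h2
    linarith
  have hE2 := Metric.tendsto_nhds.1
    (hw (fun x => |φ x| ^ q) ((continuous_abs_rpow hq0.le).comp hφc)) ε2 hε2pos
  have hE3 := Metric.tendsto_nhds.1
    (huweak (fun x => Sq q (φ x)) ((continuous_Sq hq).comp hφc)) ε2 hε2pos
  have hE4 := Metric.tendsto_nhds.1
    (hw (fun x => Sq q (φ x) * φ x) (((continuous_Sq hq).comp hφc).mul hφc)) ε2 hε2pos
  have hE5 := Metric.tendsto_nhds.1 (hvweak φ hφc) (δ/3) (by linarith)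
  filter_upwards [hE1, hE2, hE3, hE4, hE5] with n h1 h2 h3 h4 h5
  rw [Real.dist_eq] at h2 h3 h4 h5 ⊢
  -- bound on ∫ Dq(u n, φ) d(mn n)
  have hDn : ∫ x, Dq q (u n x) (φ x) ∂(mn n) ≤ δ2 := by
    rw [integral_Dq hq (hu n) (huint n) hφc]
    have d2 := (abs_lt.1 h2).1
    have d2' := (abs_lt.1 h2).2
    have d3 := (abs_lt.1 h3).1
    have d4 := (abs_lt.1 h4).2
    have hq2 : (2 + 2*q) * ε2 ≤ δ2/2 := by
      have h := mul_le_mul_of_nonneg_left hε2a (show (0:ℝ) ≤ 2 + 2*q by linarith only [hq0])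
      have hne : q + 1 ≠ 0 := ne_of_gt (by linarith only [hq0])
      have he : (2 + 2*q) * (δ2/(8*(q+1))) = δ2/4 := by
        field_simp
        ring
      linarith only [h, he, hδ2pos]
    have hqd3 : q * (∫ x, Sq q (φ x) * uL x ∂m - ε2) ≤ q * ∫ x, Sq q (φ x) * u n x ∂(mn n) :=
      mul_le_mul_of_nonneg_left (by linarith) hq0.le
    have hqd4 : q * ∫ x, Sq q (φ x) * φ x ∂(mn n) ≤ q * (∫ x, Sq q (φ x) * φ x ∂m + ε2) :=
      mul_le_mul_of_nonneg_left (by linarith) hq0.le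
    have hexp : q * (∫ x, Sq q (φ x) * uL x ∂m - ε2) = q * (∫ x, Sq q (φ x) * uL x ∂m) - q * ε2 := by ring
    have hexp2 : q * (∫ x, Sq q (φ x) * φ x ∂m + ε2) = q * (∫ x, Sq q (φ x) * φ x ∂m) + q * ε2 := by ring
    have hq2' : 2 * ε2 + 2 * (q * ε2) ≤ δ2/2 := by
      have : (2 + 2*q) * ε2 = 2 * ε2 + 2 * (q * ε2) := by ring
      linarith only [hq2, this]
    rw [hexp] at hqd3
    rw [hexp2] at hqd4
    linarith only [hDexp, h1, hDinfty, d2, hqd3, hqd4, hq2']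
  -- bound on ∫ |u n - φ|^q d(mn n)
  have hsubnmem : MemLp (u n - φ) (ENNReal.ofReal q) (mn n) :=
    (hu n).sub (cont_memLp hφc _ _)
  have hsubnint : Integrable (fun x => |u n x - φ x| ^ q) (mn n) := by
    have := int_abs_rpow hq0 hsubnmem
    simpa only [Pi.sub_apply] using this
  have hφqintn : Integrable (fun x => |φ x| ^ q) (mn n) :=
    cont_integrable ((continuous_abs_rpow hq0.le).comp hφc) (mn n)
  have hunqint : Integrable (fun x => |u n x| ^ q) (mn n) := int_abs_rpow hq0 (hu n)
  have hDnint : Integrable (fun x => Dq q (u n x) (φ x)) (mn n) :=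
    int_Dq hq (hu n) (huint n) hφc
  have hEn : ∫ x, |u n x - φ x| ^ q ∂(mn n) ≤ δ1 := by
    have hpt : ∀ x, |u n x - φ x| ^ q ≤
        ε1 * (|u n x| ^ q + |φ x| ^ q) + C1 * Dq q (u n x) (φ x) := fun x => hC1 _ _
    have hint2 : Integrable
        (fun x => ε1 * (|u n x| ^ q + |φ x| ^ q) + C1 * Dq q (u n x) (φ x)) (mn n) :=
      ((hunqint.add hφqintn).const_mul ε1).add (hDnint.const_mul C1)
    have hstep : ∫ x, |u n x - φ x| ^ q ∂(mn n) ≤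
        ε1 * ((∫ x, |u n x| ^ q ∂(mn n)) + ∫ x, |φ x| ^ q ∂(mn n))
          + C1 * ∫ x, Dq q (u n x) (φ x) ∂(mn n) := by
      calc ∫ x, |u n x - φ x| ^ q ∂(mn n)
          ≤ ∫ x, ε1 * (|u n x| ^ q + |φ x| ^ q) + C1 * Dq q (u n x) (φ x) ∂(mn n) :=
            integral_mono hsubnint hint2 hpt
        _ = ε1 * ((∫ x, |u n x| ^ q ∂(mn n)) + ∫ x, |φ x| ^ q ∂(mn n))
            + C1 * ∫ x, Dq q (u n x) (φ x) ∂(mn n) := by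
            have ha : Integrable (fun x => ε1 * (|u n x| ^ q + |φ x| ^ q)) (mn n) :=
              (hunqint.add hφqintn).const_mul ε1
            have hb : Integrable (fun x => C1 * Dq q (u n x) (φ x)) (mn n) :=
              hDnint.const_mul C1
            rw [integral_add ha hb, MeasureTheory.integral_const_mul,
              MeasureTheory.integral_const_mul, integral_add hunqint hφqintn]
    have hJn : ∫ x, |φ x| ^ q ∂(mn n) ≤ A2 := by
      have hj := (abs_lt.1 h2).2
      rw [hA2def]; linarith only [hj, hφA2, hε2b]
    have hne : MuQ + A2 + 1 ≠ 0 := ne_of_gt (by linarith only [hMuQ0, hA2pos])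
    have hε1b : ε1 * (MuQ + A2 + 1) = δ1/2 := by
      rw [hε1def]; field_simp
    have hC1b : C1 * δ2 ≤ δ1/2 := by
      have hne : C1 + 1 ≠ 0 := ne_of_gt (by linarith only [hC1pos])
      have he : (C1 + 1) * (δ1/(2*(C1+1))) = δ1/2 := by
        field_simp
      have h := mul_le_mul_of_nonneg_right (show C1 ≤ C1 + 1 by linarith only [])
        (le_of_lt (div_pos hδ1pos (by linarith only [hC1pos] : (0:ℝ) < 2*(C1+1))))
      rw [hδ2def]
      calc C1 * (δ1/(2*(C1+1))) ≤ (C1+1) * (δ1/(2*(C1+1))) := h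
        _ = δ1/2 := he
    have hterm1 : ε1 * ((∫ x, |u n x| ^ q ∂(mn n)) + ∫ x, |φ x| ^ q ∂(mn n)) ≤ δ1/2 := by
      have hsum : (∫ x, |u n x| ^ q ∂(mn n)) + ∫ x, |φ x| ^ q ∂(mn n) ≤ MuQ + A2 + 1 := by
        have hm := hMuQb n
        linarith only [hm, hJn]
      have := mul_le_mul_of_nonneg_left hsum hε1pos.le
      linarith only [this, hε1b]
    have hterm2 : C1 * ∫ x, Dq q (u n x) (φ x) ∂(mn n) ≤ δ1/2 := by
      have := mul_le_mul_of_nonneg_left hDn hC1pos.le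
      linarith only [this, hC1b]
    linarith only [hstep, hterm1, hterm2]
  -- Hölder bounds
  have hT1 : |∫ x, (u n x - φ x) * v n x ∂(mn n)| ≤ δ/3 := by
    have hEnn : 0 ≤ ∫ x, |u n x - φ x| ^ q ∂(mn n) :=
      integral_nonneg fun x => Real.rpow_nonneg (abs_nonneg _) q
    have habs : |∫ x, (u n x - φ x) * v n x ∂(mn n)| ≤
        ∫ x, |u n x - φ x| * |v n x| ∂(mn n) := by
      have h := norm_integral_le_integral_norm (fun x => (u n x - φ x) * v n x) (μ := mn n)
      simpa only [Real.norm_eq_abs, abs_mul] using h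
    have hmem1 : MemLp (fun x => |u n x - φ x|) (ENNReal.ofReal q) (mn n) := by
      have := hsubnmem.norm
      simpa only [Pi.sub_apply, Real.norm_eq_abs] using this
    have hmem2 : MemLp (fun x => |v n x|) (ENNReal.ofReal p) (mn n) := by
      have := (hv n).norm
      simpa only [Real.norm_eq_abs] using this
    have hH := MeasureTheory.integral_mul_le_Lp_mul_Lq_of_nonneg hconj
      (Eventually.of_forall fun x => abs_nonneg (u n x - φ x))
      (Eventually.of_forall fun x => abs_nonneg (v n x)) hmem1 hmem2
    have hδ1q : δ1 ^ (1/q) = δ/(3*(Mv'+1)) := by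
      rw [hδ1def, rpow_q_inv' _ (div_nonneg hδ.le (by linarith only [hMv'0]))]
    have hr1 : (∫ x, |u n x - φ x| ^ q ∂(mn n)) ^ (1/q) ≤ δ/(3*(Mv'+1)) := by
      rw [← hδ1q]
      exact Real.rpow_le_rpow hEnn hEn (one_div_pos.2 hq0).le
    have hr2 : (∫ x, |v n x| ^ p ∂(mn n)) ^ (1/p) ≤ Mv' := hMv' n
    have hbound : (∫ x, |u n x - φ x| ^ q ∂(mn n)) ^ (1/q) *
        (∫ x, |v n x| ^ p ∂(mn n)) ^ (1/p) ≤ (δ/(3*(Mv'+1))) * Mv' := by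
      have hn1 : 0 ≤ (∫ x, |u n x - φ x| ^ q ∂(mn n)) ^ (1/q) :=
        Real.rpow_nonneg hEnn _
      have hn2 : 0 ≤ (∫ x, |v n x| ^ p ∂(mn n)) ^ (1/p) :=
        Real.rpow_nonneg (integral_nonneg fun x => Real.rpow_nonneg (abs_nonneg _) p) _
      exact mul_le_mul hr1 hr2 hn2 (div_nonneg hδ.le (by linarith only [hMv'0]))
    have hfinal : (δ/(3*(Mv'+1))) * Mv' ≤ δ/3 := by
      rw [div_mul_eq_mul_div, div_le_div_iff₀
        (by linarith only [hMv'0] : (0:ℝ) < 3*(Mv'+1)) (by norm_num : (0:ℝ) < 3)]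
      nlinarith only [hδ, hMv'0]
    calc |∫ x, (u n x - φ x) * v n x ∂(mn n)|
        ≤ ∫ x, |u n x - φ x| * |v n x| ∂(mn n) := habs
      _ ≤ (∫ x, |u n x - φ x| ^ q ∂(mn n)) ^ (1/q) *
          (∫ x, |v n x| ^ p ∂(mn n)) ^ (1/p) := hH
      _ ≤ (δ/(3*(Mv'+1))) * Mv' := hbound
      _ ≤ δ/3 := hfinal
  have hT3 : |∫ x, (uL x - φ x) * vL x ∂m| ≤ δ/3 := by
    have hEnn : 0 ≤ ∫ x, |uL x - φ x| ^ q ∂m :=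
      integral_nonneg fun x => Real.rpow_nonneg (abs_nonneg _) q
    have habs : |∫ x, (uL x - φ x) * vL x ∂m| ≤ ∫ x, |uL x - φ x| * |vL x| ∂m := by
      have h := norm_integral_le_integral_norm (fun x => (uL x - φ x) * vL x) (μ := m)
      simpa only [Real.norm_eq_abs, abs_mul] using h
    have hmem1 : MemLp (fun x => |uL x - φ x|) (ENNReal.ofReal q) m := by
      have := hsubmem.norm
      simpa only [Pi.sub_apply, Real.norm_eq_abs] using this
    have hmem2 : MemLp (fun x => |vL x|) (ENNReal.ofReal p) m := by
      have := hvL.norm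
      simpa only [Real.norm_eq_abs] using this
    have hH := MeasureTheory.integral_mul_le_Lp_mul_Lq_of_nonneg hconj
      (Eventually.of_forall fun x => abs_nonneg (uL x - φ x))
      (Eventually.of_forall fun x => abs_nonneg (vL x)) hmem1 hmem2
    have hr1 : (∫ x, |uL x - φ x| ^ q ∂m) ^ (1/q) ≤ δ/(3*(Kv+1)) := by
      have h1 : (∫ x, |uL x - φ x| ^ q ∂m) ≤ (δ/(3*(Kv+1))) ^ q := le_trans hφq hδφle3
      have h2 := Real.rpow_le_rpow hEnn h1 (one_div_pos.2 hq0).le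
      rwa [rpow_q_inv' _ (div_nonneg hδ.le (by linarith only [hKv0]))] at h2
    have hbound : (∫ x, |uL x - φ x| ^ q ∂m) ^ (1/q) * (∫ x, |vL x| ^ p ∂m) ^ (1/p)
        ≤ (δ/(3*(Kv+1))) * Kv := by
      exact mul_le_mul hr1 hKvdef.ge
        (Real.rpow_nonneg (integral_nonneg fun x => Real.rpow_nonneg (abs_nonneg _) p) _)
        (div_nonneg hδ.le (by linarith only [hKv0]))
    have hfinal : (δ/(3*(Kv+1))) * Kv ≤ δ/3 := by
      rw [div_mul_eq_mul_div, div_le_div_iff₀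
        (by linarith only [hKv0] : (0:ℝ) < 3*(Kv+1)) (by norm_num : (0:ℝ) < 3)]
      nlinarith only [hδ, hKv0]
    calc |∫ x, (uL x - φ x) * vL x ∂m| ≤ ∫ x, |uL x - φ x| * |vL x| ∂m := habs
      _ ≤ (∫ x, |uL x - φ x| ^ q ∂m) ^ (1/q) * (∫ x, |vL x| ^ p ∂m) ^ (1/p) := hH
      _ ≤ (δ/(3*(Kv+1))) * Kv := hbound
      _ ≤ δ/3 := hfinal
  -- decomposition
  have hone : (1:ℝ≥0∞)/1 = 1/(ENNReal.ofReal q) + 1/(ENNReal.ofReal p) := by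
    rw [one_div, one_div, one_div, inv_one,
      ← ENNReal.ofReal_inv_of_pos hq0, ← ENNReal.ofReal_inv_of_pos hp0,
      ← ENNReal.ofReal_add (inv_nonneg.2 hq0.le) (inv_nonneg.2 hp0.le), ← ENNReal.ofReal_one]
    congr 1
    rw [inv_eq_one_div, inv_eq_one_div]
    linarith
  haveI : ENNReal.HolderTriple (ENNReal.ofReal q) (ENNReal.ofReal p) 1 :=
    ⟨by rw [inv_one]; simpa [one_div] using hone.symm⟩
  have hint_n1 : Integrable (fun x => (u n x - φ x) * v n x) (mn n) := by
    have := (memLp_one_iff_integrable.1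
      ((hv n).smul hsubnmem : MemLp ((u n - φ) • v n) 1 (mn n)))
    exact this
  have hint_n2 : Integrable (fun x => φ x * v n x) (mn n) := by
    obtain ⟨C, hC⟩ := cont_bound hφc
    exact (hvint n).bdd_mul hφc.aestronglyMeasurable
      (ae_of_all _ fun x => by simpa [Real.norm_eq_abs] using hC x)
  have hint_m1 : Integrable (fun x => (uL x - φ x) * vL x) m := by
    have := (memLp_one_iff_integrable.1
      (hvL.smul hsubmem : MemLp ((uL - φ) • vL) 1 m))
    exact this
  have hint_m2 : Integrable (fun x => φ x * vL x) m := by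
    obtain ⟨C, hC⟩ := cont_bound hφc
    exact hvLint.bdd_mul hφc.aestronglyMeasurable
      (ae_of_all _ fun x => by simpa [Real.norm_eq_abs] using hC x)
  have hdec_n : ∫ x, u n x * v n x ∂(mn n) =
      (∫ x, (u n x - φ x) * v n x ∂(mn n)) + ∫ x, φ x * v n x ∂(mn n) := by
    rw [← integral_add hint_n1 hint_n2]
    congr 1
    funext x
    ring
  have hdec_m : ∫ x, uL x * vL x ∂m =
      (∫ x, (uL x - φ x) * vL x ∂m) + ∫ x, φ x * vL x ∂m := by
    rw [← integral_add hint_m1 hint_m2]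
    congr 1
    funext x
    ring
  rw [hdec_n, hdec_m]
  have hfin : |(∫ x, (u n x - φ x) * v n x ∂(mn n)) + ∫ x, φ x * v n x ∂(mn n)
      - ((∫ x, (uL x - φ x) * vL x ∂m) + ∫ x, φ x * vL x ∂m)|
      ≤ |∫ x, (u n x - φ x) * v n x ∂(mn n)|
        + |(∫ x, φ x * v n x ∂(mn n)) - ∫ x, φ x * vL x ∂m|
        + |∫ x, (uL x - φ x) * vL x ∂m| := by
    have h := abs_add_le ((∫ x, (u n x - φ x) * v n x ∂(mn n))
      + ((∫ x, φ x * v n x ∂(mn n)) - ∫ x, φ x * vL x ∂m))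
      (-(∫ x, (uL x - φ x) * vL x ∂m))
    have h2 := abs_add_le (∫ x, (u n x - φ x) * v n x ∂(mn n))
      ((∫ x, φ x * v n x ∂(mn n)) - ∫ x, φ x * vL x ∂m)
    rw [abs_neg] at h
    calc |(∫ x, (u n x - φ x) * v n x ∂(mn n)) + ∫ x, φ x * v n x ∂(mn n)
        - ((∫ x, (uL x - φ x) * vL x ∂m) + ∫ x, φ x * vL x ∂m)|
        = |(∫ x, (u n x - φ x) * v n x ∂(mn n))
            + ((∫ x, φ x * v n x ∂(mn n)) - ∫ x, φ x * vL x ∂m)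
            + -(∫ x, (uL x - φ x) * vL x ∂m)| := by congr 1; ring
      _ ≤ _ := by
          refine le_trans h ?_
          exact add_le_add h2 le_rfl
  refine lt_of_le_of_lt hfin ?_
  have h5' : |(∫ x, φ x * v n x ∂(mn n)) - ∫ x, φ x * vL x ∂m| < δ/3 := h5
  linarith only [hT1, hT3, h5', hδ]
end
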